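/- arXiv:2012.05083 — 4 statements merged into one kernel-verified Lean document; each statement's English description precedes it below -/
import Mathlib

section
/- Let W = (W_t)_{t≥0} be a standard one-dimensional Brownian motion and T an exponentially distributed random variable with parameter λ > 0 independent of W. Let σ > 0, a ∈ ℝ, set β̃ := 2a/σ² − 1 and V_s := σ W_s + (a − σ²/2) s. Let β > 0 be such that (1/2)σ²β(β̃ − β) + λ > 0 and such that there exists p > 1 with β/p − β̃ > 0. Then E[ (∫₀^T e^{−V_s} ds)^β ] < ∞. -/
open MeasureTheory ProbabilityTheory Real Set
open scoped ENNReal NNReal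

noncomputable section

namespace BMaux

variable {Ω : Type*} [MeasurableSpace Ω]

lemma gaussian_pdf_complete_square (v : ℝ≥0) (hv : v ≠ 0) (c x : ℝ) :
    gaussianPDFReal 0 v x * Real.exp (c * x)
      = Real.exp (c ^ 2 * v / 2) * gaussianPDFReal (c * v) v x := by
  have hv' : (0:ℝ) < (v:ℝ) := lt_of_le_of_ne v.coe_nonneg (by exact_mod_cast hv.symm)
  simp only [gaussianPDFReal]
  rw [mul_assoc, ← Real.exp_add, mul_left_comm, ← Real.exp_add]
  congr 1
  field_simp
  ring

lemma lintegral_exp_gaussian (P : Measure Ω) [IsProbabilityMeasure P]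
    (X : Ω → ℝ) (hX : Measurable X) (v : ℝ≥0)
    (hlaw : Measure.map X P = gaussianReal 0 v) (c : ℝ) :
    ∫⁻ ω, ENNReal.ofReal (Real.exp (c * X ω)) ∂P
      = ENNReal.ofReal (Real.exp (c ^ 2 * v / 2)) := by
  have hmeas : Measurable fun x : ℝ => ENNReal.ofReal (Real.exp (c * x)) :=
    (Real.measurable_exp.comp (measurable_id.const_mul c)).ennreal_ofReal
  have h1 : ∫⁻ ω, ENNReal.ofReal (Real.exp (c * X ω)) ∂P
      = ∫⁻ x, ENNReal.ofReal (Real.exp (c * x)) ∂(gaussianReal 0 v) := by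
    rw [← hlaw, lintegral_map hmeas hX]
  rw [h1]
  by_cases hv : v = 0
  · subst hv
    simp [lintegral_dirac]
  · rw [gaussianReal_of_var_ne_zero _ hv,
      lintegral_withDensity_eq_lintegral_mul _ (measurable_gaussianPDF _ _) hmeas]
    have h2 : ∀ x : ℝ, (gaussianPDF 0 v * fun x => ENNReal.ofReal (Real.exp (c * x))) x
        = ENNReal.ofReal (Real.exp (c ^ 2 * v / 2)) * gaussianPDF (c * v) v x := by
      intro x
      simp only [Pi.mul_apply, gaussianPDF]
      rw [← ENNReal.ofReal_mul (gaussianPDFReal_nonneg _ _ _),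
        gaussian_pdf_complete_square v hv c x,
        ENNReal.ofReal_mul (Real.exp_nonneg _)]
    simp only [h2]
    rw [lintegral_const_mul _ (measurable_gaussianPDF _ _), lintegral_gaussianPDF_eq_one _ hv,
      mul_one]

lemma lintegral_exp_tail (P : Measure Ω) [IsProbabilityMeasure P]
    (T : Ω → ℝ) (hT : Measurable T) {lam : ℝ} (hlam : 0 < lam)
    (hTlaw : Measure.map T P = ProbabilityTheory.expMeasure lam) {s : ℝ} (hs : 0 ≤ s) :
    P {ω | s < T ω} = ENNReal.ofReal (Real.exp (-(lam * s))) := by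
  have h1 : {ω | s < T ω} = T ⁻¹' (Ioi s) := rfl
  rw [h1, ← Measure.map_apply hT measurableSet_Ioi, hTlaw]
  have hprob : IsProbabilityMeasure (expMeasure lam) := isProbabilityMeasure_expMeasure hlam
  have hIic : expMeasure lam (Iic s) = ENNReal.ofReal (1 - Real.exp (-(lam * s))) := by
    rw [expMeasure, gammaMeasure, withDensity_apply _ measurableSet_Iic]
    have h2 : ∫⁻ y in Iic s, gammaPDF 1 lam y = ∫⁻ y in Iic s, exponentialPDF lam y := rfl
    rw [h2, lintegral_exponentialPDF_eq_antiDeriv hlam s, if_pos hs]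
  have hcompl : expMeasure lam (Ioi s) = 1 - expMeasure lam (Iic s) := by
    rw [← Set.compl_Iic, measure_compl measurableSet_Iic (measure_ne_top _ _), measure_univ]
  rw [hcompl, hIic]
  have hle1 : Real.exp (-(lam * s)) ≤ 1 :=
    Real.exp_le_one_iff.mpr (by nlinarith)
  rw [ENNReal.ofReal_sub _ (Real.exp_nonneg _), ENNReal.ofReal_one]
  rw [ENNReal.sub_sub_cancel ENNReal.one_ne_top (ENNReal.ofReal_le_one.mpr hle1)]

lemma T_nonneg_ae (P : Measure Ω) [IsProbabilityMeasure P]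
    (T : Ω → ℝ) (hT : Measurable T) {lam : ℝ}
    (hTlaw : Measure.map T P = ProbabilityTheory.expMeasure lam) :
    ∀ᵐ ω ∂P, 0 ≤ T ω := by
  have h1 : P {ω | T ω < 0} = 0 := by
    have h2 : {ω | T ω < 0} = T ⁻¹' (Iio 0) := rfl
    rw [h2, ← Measure.map_apply hT measurableSet_Iio, hTlaw]
    rw [expMeasure, gammaMeasure, withDensity_apply _ measurableSet_Iio]
    exact lintegral_gammaPDF_of_nonpos le_rfl
  have h3 : ∀ᵐ ω ∂P, ω ∉ {ω | T ω < 0} := measure_eq_zero_iff_ae_notMem.mp h1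
  filter_upwards [h3] with ω hω
  simpa using not_lt.mp hω

lemma lintegral_exp_neg_lt_top {c : ℝ} (hc : 0 < c) :
    ∫⁻ s in Ioi (0:ℝ), ENNReal.ofReal (Real.exp (-(c * s))) < ⊤ := by
  have hint : IntegrableOn (fun s : ℝ => Real.exp (-(c * s))) (Ioi 0) := by
    simpa [neg_mul] using exp_neg_integrableOn_Ioi 0 hc
  calc ∫⁻ s in Ioi (0:ℝ), ENNReal.ofReal (Real.exp (-(c * s)))
      = ENNReal.ofReal (∫ s in Ioi (0:ℝ), Real.exp (-(c * s))) := by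
        rw [ofReal_integral_eq_lintegral_ofReal hint (ae_of_all _ fun x => Real.exp_nonneg _)]
    _ < ⊤ := ENNReal.ofReal_lt_top

lemma rpow_le_one_add {x β : ℝ} (hx : 0 ≤ x) (hβ : 0 ≤ β) (hβ1 : β ≤ 1) :
    x ^ β ≤ 1 + x := by
  rcases le_total x 1 with h | h
  · calc x ^ β ≤ 1 := Real.rpow_le_one hx h hβ
      _ ≤ 1 + x := by linarith
  · calc x ^ β ≤ x ^ (1:ℝ) := Real.rpow_le_rpow_of_exponent_le h hβ1
      _ = x := Real.rpow_one x
      _ ≤ 1 + x := by linarith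

lemma real_rpow_add_le {x y β : ℝ} (hx : 0 ≤ x) (hy : 0 ≤ y) (hβ : 0 ≤ β) (hβ1 : β ≤ 1) :
    (x + y) ^ β ≤ x ^ β + y ^ β := by
  have h := NNReal.rpow_add_le_add_rpow x.toNNReal y.toNNReal hβ hβ1
  have h2 := NNReal.coe_le_coe.mpr h
  rw [NNReal.coe_rpow, NNReal.coe_add, NNReal.coe_add, NNReal.coe_rpow, NNReal.coe_rpow,
    Real.coe_toNNReal x hx, Real.coe_toNNReal y hy] at h2
  exact h2

lemma rpow_sum_le_sum_rpow {β : ℝ} (hβ : 0 < β) (hβ1 : β ≤ 1) (n : ℕ) (x : ℕ → ℝ)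
    (hx : ∀ i, 0 ≤ x i) :
    (∑ i ∈ Finset.range n, x i) ^ β ≤ ∑ i ∈ Finset.range n, x i ^ β := by
  induction n with
  | zero => simp [Real.zero_rpow hβ.ne']
  | succ n ih =>
    rw [Finset.sum_range_succ, Finset.sum_range_succ]
    calc (∑ i ∈ Finset.range n, x i + x n) ^ β
        ≤ (∑ i ∈ Finset.range n, x i) ^ β + x n ^ β :=
          real_rpow_add_le (Finset.sum_nonneg fun i _ => hx i) (hx n) hβ.le hβ1
    _ ≤ _ := by gcongr



section PW

/-- Deterministic weighted Hölder bound for an interval integral, `1 < β`. -/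
lemma pointwise_holder {f : ℝ → ℝ} (hf : Continuous f) (hfnn : ∀ s, 0 ≤ f s)
    {β δ t : ℝ} (hβ : 1 < β) (hδ : 0 < δ) (ht : 0 ≤ t) :
    ENNReal.ofReal ((∫ s in (0:ℝ)..t, f s) ^ β)
      ≤ (∫⁻ s in Ioi (0:ℝ), ENNReal.ofReal (rexp (-(δ * Real.conjExponent β * s)))) ^ (β - 1)
        * ∫⁻ s in Ioo (0:ℝ) t, ENNReal.ofReal (rexp (β * δ * s) * f s ^ β) := by
  set q := Real.conjExponent β with hqdef
  have hpq : q.HolderConjugate β := (Real.HolderConjugate.conjExponent hβ).symm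
  have hβ0 : (0:ℝ) < β := by linarith
  have hA : (0:ℝ) ≤ ∫ s in (0:ℝ)..t, f s :=
    intervalIntegral.integral_nonneg ht fun u _ => hfnn u
  have hint : IntegrableOn f (Ioo 0 t) := (hf.integrableOn_Icc).mono_set Ioo_subset_Icc_self
  have hu : Measurable fun s : ℝ => ENNReal.ofReal (rexp (-(δ * s))) :=
    (Real.measurable_exp.comp (measurable_id.const_mul δ).neg).ennreal_ofReal
  have hv : Measurable fun s : ℝ => ENNReal.ofReal (rexp (δ * s) * f s) :=
    ((Real.measurable_exp.comp (measurable_id.const_mul δ)).mul hf.measurable).ennreal_ofReal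
  have h1 : ENNReal.ofReal (∫ s in (0:ℝ)..t, f s) = ∫⁻ s in Ioo (0:ℝ) t, ENNReal.ofReal (f s) := by
    rw [intervalIntegral.integral_of_le ht, integral_Ioc_eq_integral_Ioo,
      ofReal_integral_eq_lintegral_ofReal hint (ae_of_all _ fun s => hfnn s)]
  have h2 : (∫⁻ s in Ioo (0:ℝ) t, ENNReal.ofReal (f s))
      = ∫⁻ s in Ioo (0:ℝ) t,
        ((fun s => ENNReal.ofReal (rexp (-(δ * s)))) * fun s => ENNReal.ofReal (rexp (δ * s) * f s)) s := by
    refine lintegral_congr fun s => ?_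
    simp only [Pi.mul_apply]
    rw [← ENNReal.ofReal_mul (exp_nonneg _), ← mul_assoc, ← Real.exp_add, neg_add_cancel,
      Real.exp_zero, one_mul]
  have h3 := ENNReal.lintegral_mul_le_Lp_mul_Lq (volume.restrict (Ioo 0 t)) hpq
    hu.aemeasurable hv.aemeasurable
  have hu_pow : ∀ s : ℝ, (ENNReal.ofReal (rexp (-(δ * s)))) ^ q
      = ENNReal.ofReal (rexp (-(δ * q * s))) := by
    intro s
    rw [ENNReal.ofReal_rpow_of_nonneg (exp_nonneg _) hpq.nonneg, ← Real.exp_mul]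
    congr 2
    ring
  have hv_pow : ∀ s : ℝ, (ENNReal.ofReal (rexp (δ * s) * f s)) ^ β
      = ENNReal.ofReal (rexp (β * δ * s) * f s ^ β) := by
    intro s
    rw [ENNReal.ofReal_rpow_of_nonneg (mul_nonneg (exp_nonneg _) (hfnn s)) hβ0.le,
      Real.mul_rpow (exp_nonneg _) (hfnn s), ← Real.exp_mul]
    congr 3
    ring
  calc ENNReal.ofReal ((∫ s in (0:ℝ)..t, f s) ^ β)
      = (ENNReal.ofReal (∫ s in (0:ℝ)..t, f s)) ^ β :=
        (ENNReal.ofReal_rpow_of_nonneg hA hβ0.le).symm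
    _ = (∫⁻ s in Ioo (0:ℝ) t,
        ((fun s => ENNReal.ofReal (rexp (-(δ * s)))) * fun s => ENNReal.ofReal (rexp (δ * s) * f s)) s) ^ β := by
        rw [h1, h2]
    _ ≤ ((∫⁻ s in Ioo (0:ℝ) t, (ENNReal.ofReal (rexp (-(δ * s)))) ^ q) ^ (1/q)
          * (∫⁻ s in Ioo (0:ℝ) t, (ENNReal.ofReal (rexp (δ * s) * f s)) ^ β) ^ (1/β)) ^ β :=
        ENNReal.rpow_le_rpow h3 hβ0.le
    _ = ((∫⁻ s in Ioo (0:ℝ) t, (ENNReal.ofReal (rexp (-(δ * s)))) ^ q) ^ (β/q))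
          * ∫⁻ s in Ioo (0:ℝ) t, (ENNReal.ofReal (rexp (δ * s) * f s)) ^ β := by
        rw [ENNReal.mul_rpow_of_nonneg _ _ hβ0.le, ← ENNReal.rpow_mul, ← ENNReal.rpow_mul,
          show 1/q*β = β/q by ring, show 1/β*β = 1 by field_simp, ENNReal.rpow_one]
    _ ≤ (∫⁻ s in Ioi (0:ℝ), ENNReal.ofReal (rexp (-(δ * q * s)))) ^ (β - 1)
          * ∫⁻ s in Ioo (0:ℝ) t, ENNReal.ofReal (rexp (β * δ * s) * f s ^ β) := by
        rw [show β/q = β - 1 from hpq.symm.div_conj_eq_sub_one]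
        refine mul_le_mul' (ENNReal.rpow_le_rpow ?_ (by linarith))
          (le_of_eq (lintegral_congr fun s => hv_pow s))
        calc (∫⁻ s in Ioo (0:ℝ) t, (ENNReal.ofReal (rexp (-(δ * s)))) ^ q)
            = ∫⁻ s in Ioo (0:ℝ) t, ENNReal.ofReal (rexp (-(δ * q * s))) :=
              lintegral_congr fun s => hu_pow s
          _ ≤ _ := lintegral_mono_set Ioo_subset_Ioi_self


lemma ofReal_intervalIntegral_eq {f : ℝ → ℝ} (hf : Continuous f) (hfnn : ∀ s, 0 ≤ f s)
    {t : ℝ} (ht : 0 ≤ t) :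
    ENNReal.ofReal (∫ s in (0:ℝ)..t, f s) = ∫⁻ s in Ioo (0:ℝ) t, ENNReal.ofReal (f s) := by
  rw [intervalIntegral.integral_of_le ht, integral_Ioc_eq_integral_Ioo,
    ofReal_integral_eq_lintegral_ofReal ((hf.integrableOn_Icc).mono_set Ioo_subset_Icc_self)
      (ae_of_all _ fun s => hfnn s)]

end PW


section Blocks

/-- Deterministic block decomposition bound for `β ≤ 1`. -/
lemma pointwise_blocks {f : ℝ → ℝ} (hf : Continuous f) (hfnn : ∀ s, 0 ≤ f s) {β t : ℝ}
    (hβ0 : 0 < β) (hβ1 : β ≤ 1) (ht : 0 ≤ t) :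
    (∫ s in (0:ℝ)..t, f s) ^ β
      ≤ ∑ k ∈ Finset.range ⌈t⌉₊, (∫ s in ((k:ℕ):ℝ)..(((k:ℕ):ℝ) + 1), f s) ^ β := by
  have hint : ∀ u v : ℝ, IntervalIntegrable f volume u v := fun u v =>
    hf.intervalIntegrable u v
  have hXnn : ∀ k : ℕ, 0 ≤ ∫ s in ((k:ℕ):ℝ)..(((k:ℕ):ℝ) + 1), f s := fun k =>
    intervalIntegral.integral_nonneg (by linarith) fun u _ => hfnn u
  have h1 : (∫ s in (0:ℝ)..t, f s) ≤ ∫ s in (0:ℝ)..((⌈t⌉₊ : ℕ):ℝ), f s := by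
    refine intervalIntegral.integral_mono_interval le_rfl ht (Nat.le_ceil t)
      (ae_of_all _ fun s => hfnn s) (hint _ _)
  have h2 : (∫ s in (0:ℝ)..((⌈t⌉₊ : ℕ):ℝ), f s)
      = ∑ k ∈ Finset.range ⌈t⌉₊, ∫ s in ((k:ℕ):ℝ)..(((k:ℕ):ℝ) + 1), f s := by
    have h3 := intervalIntegral.sum_integral_adjacent_intervals
      (a := fun k : ℕ => (k:ℝ)) (n := ⌈t⌉₊) (fun k _ => hint _ _)
    simp only [Nat.cast_zero, Nat.cast_add, Nat.cast_one] at h3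
    exact h3.symm
  calc (∫ s in (0:ℝ)..t, f s) ^ β
      ≤ (∑ k ∈ Finset.range ⌈t⌉₊, ∫ s in ((k:ℕ):ℝ)..(((k:ℕ):ℝ) + 1), f s) ^ β := by
        apply Real.rpow_le_rpow (intervalIntegral.integral_nonneg ht fun u _ => hfnn u)
          (by rw [← h2]; exact h1) hβ0.le
    _ ≤ _ := rpow_sum_le_sum_rpow hβ0 hβ1 _ _ hXnn

end Blocks

section Incr

variable {Ω : Type*} [MeasurableSpace Ω]

/-- From the BM increment axiom: `W k` is independent of the increment `W s - W k`. -/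
lemma indepFun_W_incr (P : Measure Ω) [IsProbabilityMeasure P] (W : ℝ → Ω → ℝ)
    (hW0 : ∀ ω, W 0 ω = 0)
    (hWind : ∀ (n : ℕ) (u : ℕ → ℝ), Monotone u → 0 ≤ u 0 →
      iIndepFun
        (fun i : Fin n => fun ω => W (u (i + 1)) ω - W (u i) ω) P)
    {k s : ℝ} (hk : 0 ≤ k) (hks : k ≤ s) :
    IndepFun (W k) (fun ω => W s ω - W k ω) P := by
  set u : ℕ → ℝ := fun n => if n = 0 then 0 else if n = 1 then k else s with hu
  have hmono : Monotone u := monotone_nat_of_le_succ (fun n => by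
    match n with
    | 0 => simpa [hu] using hk
    | 1 => simpa [hu] using hks
    | (m+2) => simp [hu])
  have h := hWind 2 u hmono (by simp [hu])
  have h01 := h.indepFun (show (0 : Fin 2) ≠ 1 by decide)
  have e0 : W k = fun ω => W (u ((0 : Fin 2) + 1)) ω - W (u (0 : Fin 2)) ω := by
    funext ω
    simp [hu, hW0 ω]
  have e1 : (fun ω => W s ω - W k ω)
      = fun ω => W (u ((1 : Fin 2) + 1)) ω - W (u (1 : Fin 2)) ω := by
    funext ω
    simp [hu]
  rw [← e0, ← e1] at h01
  exact h01

end Incr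

section CaseA

variable {Ω : Type*} [MeasurableSpace Ω]

/-- Case `1 ≤ β` of the main theorem. -/
lemma caseA (P : Measure Ω) [IsProbabilityMeasure P] (W : ℝ → Ω → ℝ) (T : Ω → ℝ)
    (lam σ b β δ : ℝ)
    (hWmeas : ∀ t, Measurable (W t)) (hWcont : ∀ ω, Continuous fun t => W t ω)
    (hWun : Measurable (Function.uncurry W))
    (hT : Measurable T) (hTae : ∀ᵐ ω ∂P, 0 ≤ T ω)
    (hindep : Indep (MeasurableSpace.comap T Real.measurableSpace)
      (⨆ t : ℝ, MeasurableSpace.comap (W t) Real.measurableSpace) P)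
    (hmgf : ∀ (c s : ℝ), 0 ≤ s →
      ∫⁻ ω, ENNReal.ofReal (rexp (c * W s ω)) ∂P = ENNReal.ofReal (rexp (c ^ 2 * s / 2)))
    (htail : ∀ s : ℝ, 0 ≤ s → P (T ⁻¹' (Ioi s)) = ENNReal.ofReal (rexp (-(lam * s))))
    (hβ1 : 1 ≤ β) (hδpos : 0 < δ)
    (hcpos : 0 < lam - β * δ + β * b - β ^ 2 * σ ^ 2 / 2) :
    ∫⁻ ω, ENNReal.ofReal
        ((∫ s in (0:ℝ)..(T ω), rexp (-(σ * W s ω + b * s))) ^ β) ∂P < ⊤ := by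
  have h𝒢le : (⨆ t : ℝ, MeasurableSpace.comap (W t) Real.measurableSpace)
      ≤ ‹MeasurableSpace Ω› := iSup_le fun t => measurable_iff_comap_le.mp (hWmeas t)
  have hTle : MeasurableSpace.comap T Real.measurableSpace ≤ ‹MeasurableSpace Ω› :=
    measurable_iff_comap_le.mp hT
  have hWs𝒢 : ∀ s : ℝ,
      Measurable[⨆ t : ℝ, MeasurableSpace.comap (W t) Real.measurableSpace] (W s) := fun s =>
    Measurable.of_comap_le (le_iSup (fun t => MeasurableSpace.comap (W t) Real.measurableSpace) s)
  have hcontω : ∀ ω, Continuous fun s => rexp (-(σ * W s ω + b * s)) := fun ω =>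
    Real.continuous_exp.comp (((continuous_const.mul (hWcont ω)).add
      (continuous_const.mul continuous_id)).neg)
  set c : ℝ := lam - β * δ + β * b - β ^ 2 * σ ^ 2 / 2 with hcdef
  have hF : Measurable fun p : ℝ × Ω =>
      ENNReal.ofReal (rexp (β * δ * p.1 - β * (σ * W p.1 p.2 + b * p.1))) := by
    apply Measurable.ennreal_ofReal
    apply Real.measurable_exp.comp
    exact (measurable_fst.const_mul (β * δ)).sub
      (((hWun.const_mul σ).add (measurable_fst.const_mul b)).const_mul β)
  have hS : MeasurableSet {p : ℝ × Ω | p.1 < T p.2} :=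
    measurableSet_lt measurable_fst (hT.comp measurable_snd)
  set G : ℝ × Ω → ℝ≥0∞ := fun p =>
    if p.1 < T p.2 then ENNReal.ofReal (rexp (β * δ * p.1 - β * (σ * W p.1 p.2 + b * p.1)))
    else 0 with hGdef
  have hGmeas : Measurable G := Measurable.ite hS hF measurable_const
  have hinner : ∀ s : ℝ, 0 < s →
      ∫⁻ ω, G (s, ω) ∂P = ENNReal.ofReal (rexp (-(c * s))) := by
    intro s hs
    have hrw : ∀ ω, G (s, ω) = ((T ⁻¹' (Ioi s)).indicator (fun _ => (1:ℝ≥0∞)) ω) *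
        ((ENNReal.ofReal (rexp (β * δ * s - β * b * s)))
          * ENNReal.ofReal (rexp ((-(β * σ)) * W s ω))) := by
      intro ω
      by_cases hmem : s < T ω
      · rw [hGdef]
        simp only [if_pos hmem, Set.indicator_of_mem (show ω ∈ T ⁻¹' (Ioi s) from hmem), one_mul]
        rw [← ENNReal.ofReal_mul (exp_nonneg _), ← Real.exp_add]
        congr 1
        ring
      · rw [hGdef]
        simp only [if_neg hmem,
          Set.indicator_of_notMem (show ω ∉ T ⁻¹' (Ioi s) from hmem), zero_mul]
    have hf_meas : Measurable[MeasurableSpace.comap T Real.measurableSpace]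
        ((T ⁻¹' (Ioi s)).indicator (fun _ => (1:ℝ≥0∞))) :=
      measurable_const.indicator ⟨Ioi s, measurableSet_Ioi, rfl⟩
    have hg_meas : Measurable[⨆ t : ℝ, MeasurableSpace.comap (W t) Real.measurableSpace]
        (fun ω => (ENNReal.ofReal (rexp (β * δ * s - β * b * s)))
          * ENNReal.ofReal (rexp ((-(β * σ)) * W s ω))) := by
      apply Measurable.const_mul
      apply Measurable.ennreal_ofReal
      exact Real.measurable_exp.comp ((hWs𝒢 s).const_mul (-(β * σ)))
    rw [lintegral_congr hrw,
      lintegral_mul_eq_lintegral_mul_lintegral_of_independent_measurableSpace hTle h𝒢le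
        hindep hf_meas hg_meas,
      show ∫⁻ ω, (T ⁻¹' (Ioi s)).indicator (fun _ => (1:ℝ≥0∞)) ω ∂P = P (T ⁻¹' (Ioi s)) from
        lintegral_indicator_one (hT measurableSet_Ioi),
      lintegral_const_mul' _ _ ENNReal.ofReal_ne_top, hmgf (-(β * σ)) s hs.le,
      htail s hs.le, ← ENNReal.ofReal_mul (exp_nonneg _), ← ENNReal.ofReal_mul (exp_nonneg _),
      ← Real.exp_add, ← Real.exp_add]
    congr 1
    rw [hcdef]
    ring
  have hIoo_le : ∀ ω, ∫⁻ s in Ioo (0:ℝ) (T ω),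
      ENNReal.ofReal (rexp (β * δ * s) * (rexp (-(σ * W s ω + b * s))) ^ β)
        ≤ ∫⁻ s in Ioi (0:ℝ), G (s, ω) ∂volume := by
    intro ω
    rw [← lintegral_indicator measurableSet_Ioo, ← lintegral_indicator measurableSet_Ioi]
    refine lintegral_mono fun s => ?_
    by_cases hs : s ∈ Ioo (0:ℝ) (T ω)
    · rw [Set.indicator_of_mem hs, Set.indicator_of_mem (show s ∈ Ioi (0:ℝ) from hs.1),
        hGdef]
      simp only [if_pos hs.2]
      apply le_of_eq
      rw [← Real.exp_mul, ← Real.exp_add]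
      congr 1
      ring
    · rw [Set.indicator_of_notMem hs]
      exact zero_le
  suffices key : ∃ C : ℝ≥0∞, C ≠ ⊤ ∧ ∀ᵐ ω ∂P,
      ENNReal.ofReal ((∫ s in (0:ℝ)..(T ω), rexp (-(σ * W s ω + b * s))) ^ β)
        ≤ C * ∫⁻ s in Ioi (0:ℝ), G (s, ω) ∂volume by
    obtain ⟨C, hC, hae⟩ := key
    calc ∫⁻ ω, ENNReal.ofReal
          ((∫ s in (0:ℝ)..(T ω), rexp (-(σ * W s ω + b * s))) ^ β) ∂P
        ≤ ∫⁻ ω, C * ∫⁻ s in Ioi (0:ℝ), G (s, ω) ∂volume ∂P := lintegral_mono_ae hae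
      _ = C * ∫⁻ ω, ∫⁻ s in Ioi (0:ℝ), G (s, ω) ∂volume ∂P :=
          lintegral_const_mul' _ _ hC
      _ = C * ∫⁻ s in Ioi (0:ℝ), ∫⁻ ω, G (s, ω) ∂P ∂volume := by
          congr 1
          exact lintegral_lintegral_swap (hGmeas.comp measurable_swap).aemeasurable
      _ = C * ∫⁻ s in Ioi (0:ℝ), ENNReal.ofReal (rexp (-(c * s))) ∂volume := by
          congr 1
          exact setLIntegral_congr_fun measurableSet_Ioi
            (fun s hs => hinner s hs)
      _ < ⊤ := ENNReal.mul_lt_top hC.lt_top (lintegral_exp_neg_lt_top hcpos)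
  rcases eq_or_lt_of_le hβ1 with hβe | hβgt
  · subst hβe
    refine ⟨1, ENNReal.one_ne_top, ?_⟩
    filter_upwards [hTae] with ω hTω
    rw [one_mul, Real.rpow_one,
      ofReal_intervalIntegral_eq (hcontω ω) (fun s => exp_nonneg _) hTω]
    refine le_trans ?_ (hIoo_le ω)
    refine setLIntegral_mono' measurableSet_Ioo fun s hs => ?_
    apply ENNReal.ofReal_le_ofReal
    rw [Real.rpow_one]
    have h1 : (1:ℝ) ≤ rexp (1 * δ * s) := by
      have h2 : (0:ℝ) ≤ 1 * δ * s := by nlinarith [hs.1, hδpos]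
      calc (1:ℝ) = rexp 0 := Real.exp_zero.symm
        _ ≤ rexp (1 * δ * s) := Real.exp_le_exp.mpr h2
    nlinarith [Real.exp_pos (-(σ * W s ω + b * s))]
  · refine ⟨(∫⁻ s in Ioi (0:ℝ),
      ENNReal.ofReal (rexp (-(δ * Real.conjExponent β * s)))) ^ (β - 1), ?_, ?_⟩
    · have hq : 0 < Real.conjExponent β := ((Real.HolderConjugate.conjExponent hβgt).symm).pos
      exact (ENNReal.rpow_lt_top_of_nonneg (by linarith)
        (lintegral_exp_neg_lt_top (by positivity)).ne).ne
    · filter_upwards [hTae] with ω hTω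
      exact (pointwise_holder (hcontω ω) (fun s => exp_nonneg _) hβgt hδpos hTω).trans
        (mul_le_mul_right (hIoo_le ω) _)

end CaseA

section CaseB

variable {Ω : Type*} [MeasurableSpace Ω]

/-- Case `β ≤ 1` of the main theorem, via block decomposition. -/
lemma caseB (P : Measure Ω) [IsProbabilityMeasure P] (W : ℝ → Ω → ℝ) (T : Ω → ℝ)
    (lam σ b β : ℝ)
    (hWmeas : ∀ t, Measurable (W t)) (hW0 : ∀ ω, W 0 ω = 0)
    (hWcont : ∀ ω, Continuous fun t => W t ω)
    (hT : Measurable T) (hTae : ∀ᵐ ω ∂P, 0 ≤ T ω)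
    (hindep : Indep (MeasurableSpace.comap T Real.measurableSpace)
      (⨆ t : ℝ, MeasurableSpace.comap (W t) Real.measurableSpace) P)
    (hWlaw : ∀ s t : ℝ, 0 ≤ s → s ≤ t →
      Measure.map (fun ω => W t ω - W s ω) P = gaussianReal 0 (Real.toNNReal (t - s)))
    (hWind : ∀ (n : ℕ) (u : ℕ → ℝ), Monotone u → 0 ≤ u 0 →
      iIndepFun
        (fun i : Fin n => fun ω => W (u (i + 1)) ω - W (u i) ω) P)
    (htail : ∀ s : ℝ, 0 ≤ s → P (T ⁻¹' (Ioi s)) = ENNReal.ofReal (rexp (-(lam * s))))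
    (hβ0 : 0 < β) (hβ1 : β ≤ 1)
    (hρlam : σ ^ 2 * β ^ 2 / 2 - β * b < lam) :
    ∫⁻ ω, ENNReal.ofReal
        ((∫ s in (0:ℝ)..(T ω), rexp (-(σ * W s ω + b * s))) ^ β) ∂P < ⊤ := by
  have h𝒢le : (⨆ t : ℝ, MeasurableSpace.comap (W t) Real.measurableSpace)
      ≤ ‹MeasurableSpace Ω› := iSup_le fun t => measurable_iff_comap_le.mp (hWmeas t)
  have hTle : MeasurableSpace.comap T Real.measurableSpace ≤ ‹MeasurableSpace Ω› :=
    measurable_iff_comap_le.mp hT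
  have hWs𝒢 : ∀ s : ℝ,
      Measurable[⨆ t : ℝ, MeasurableSpace.comap (W t) Real.measurableSpace] (W s) := fun s =>
    Measurable.of_comap_le (le_iSup (fun t => MeasurableSpace.comap (W t) Real.measurableSpace) s)
  have hcontω : ∀ ω, Continuous fun s => rexp (-(σ * W s ω + b * s)) := fun ω =>
    Real.continuous_exp.comp (((continuous_const.mul (hWcont ω)).add
      (continuous_const.mul continuous_id)).neg)
  set ρ : ℝ := σ ^ 2 * β ^ 2 / 2 - β * b with hρdef
  set Dl : ℕ → Ω → ℝ≥0∞ := fun k ω =>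
    ∫⁻ s in Ioc ((k:ℕ):ℝ) (((k:ℕ):ℝ) + 1),
      ENNReal.ofReal (rexp (-(σ * (W s ω - W ((k:ℕ):ℝ) ω) + b * (s - ((k:ℕ):ℝ)))))
    with hDldef
  set Ek : ℕ → Ω → ℝ≥0∞ := fun k ω =>
    ENNReal.ofReal (rexp ((-β) * (σ * W ((k:ℕ):ℝ) ω + b * ((k:ℕ):ℝ)))) with hEkdef
  set Ifun : ℕ → Ω → ℝ≥0∞ := fun k ω =>
    (T ⁻¹' (Ioi ((k:ℕ):ℝ))).indicator (fun _ => (1:ℝ≥0∞)) ω * (Ek k ω * (1 + Dl k ω))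
    with hIdef
  -- Gaussian moments
  have hmgf2 : ∀ (c k s : ℝ), 0 ≤ k → k ≤ s →
      ∫⁻ ω, ENNReal.ofReal (rexp (c * (W s ω - W k ω))) ∂P
        = ENNReal.ofReal (rexp (c ^ 2 * (s - k) / 2)) := by
    intro c k s hk hks
    rw [lintegral_exp_gaussian P (fun ω => W s ω - W k ω) ((hWmeas s).sub (hWmeas k)) _ (hWlaw k s hk hks) c]
    congr 3
    rw [Real.coe_toNNReal _ (by linarith)]
  have hmgf0 : ∀ (c k : ℝ), 0 ≤ k →
      ∫⁻ ω, ENNReal.ofReal (rexp (c * W k ω)) ∂P = ENNReal.ofReal (rexp (c ^ 2 * k / 2)) := by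
    intro c k hk
    have h1 := hmgf2 c 0 k le_rfl hk
    have h2 : (fun ω => ENNReal.ofReal (rexp (c * (W k ω - W 0 ω))))
        = fun ω => ENNReal.ofReal (rexp (c * W k ω)) := by
      funext ω
      rw [hW0 ω, sub_zero]
    rw [h2] at h1
    rw [h1, sub_zero]
  -- product of independent exponentials
  have hprod : ∀ (c₁ c₂ k s : ℝ), 0 ≤ k → k ≤ s →
      ∫⁻ ω, ENNReal.ofReal (rexp (c₁ * W k ω))
          * ENNReal.ofReal (rexp (c₂ * (W s ω - W k ω))) ∂P
        = ENNReal.ofReal (rexp (c₁ ^ 2 * k / 2))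
          * ENNReal.ofReal (rexp (c₂ ^ 2 * (s - k) / 2)) := by
    intro c₁ c₂ k s hk hks
    have hφ : Measurable fun x : ℝ => ENNReal.ofReal (rexp (c₁ * x)) :=
      (Real.measurable_exp.comp (measurable_id.const_mul c₁)).ennreal_ofReal
    have hψ : Measurable fun x : ℝ => ENNReal.ofReal (rexp (c₂ * x)) :=
      (Real.measurable_exp.comp (measurable_id.const_mul c₂)).ennreal_ofReal
    have hind := (indepFun_W_incr P W hW0 hWind hk hks).comp hφ hψ
    rw [← hmgf0 c₁ k hk, ← hmgf2 c₂ k s hk hks]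
    exact lintegral_mul_eq_lintegral_mul_lintegral_of_indepFun
      (hφ.comp (hWmeas k)) (hψ.comp ((hWmeas s).sub (hWmeas k))) hind
  -- joint measurability of block integrands, wrt any σ-algebra making each W t measurable
  have hjoint : ∀ (m' : MeasurableSpace Ω), (∀ t : ℝ, Measurable[m'] (W t)) → ∀ k : ℕ,
      @Measurable (Ω × ℝ) ℝ≥0∞ (@Prod.instMeasurableSpace Ω ℝ m' _) _
        (fun p => ENNReal.ofReal
          (rexp (-(σ * (W p.2 p.1 - W ((k:ℕ):ℝ) p.1) + b * (p.2 - ((k:ℕ):ℝ)))))) := by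
    intro m' hm k
    have hun : @Measurable (ℝ × Ω) ℝ (@Prod.instMeasurableSpace ℝ Ω _ m') _
        (Function.uncurry W) := measurable_uncurry_of_continuous_of_measurable hWcont hm
    apply @Measurable.ennreal_ofReal (Ω × ℝ) (@Prod.instMeasurableSpace Ω ℝ m' _)
    apply Real.measurable_exp.comp
    apply Measurable.neg
    apply Measurable.add
    · exact ((hun.comp measurable_swap).sub ((hm _).comp measurable_fst)).const_mul σ
    · exact (measurable_snd.sub measurable_const).const_mul b
  have hDl_meas : ∀ (m' : MeasurableSpace Ω), (∀ t : ℝ, Measurable[m'] (W t)) → ∀ k : ℕ,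
      Measurable[m'] (Dl k) := by
    intro m' hm k
    exact @Measurable.lintegral_prod_right' Ω ℝ m' _ _ _ _ (hjoint m' hm k)
  have hEk_meas : ∀ (m' : MeasurableSpace Ω), (∀ t : ℝ, Measurable[m'] (W t)) → ∀ k : ℕ,
      Measurable[m'] (Ek k) := by
    intro m' hm k
    apply @Measurable.ennreal_ofReal Ω m'
    apply Real.measurable_exp.comp
    exact (((hm _).const_mul σ).add measurable_const).const_mul (-β)
  -- pointwise a.e. bound
  have hpt : ∀ᵐ ω ∂P,
      ENNReal.ofReal ((∫ s in (0:ℝ)..(T ω), rexp (-(σ * W s ω + b * s))) ^ β)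
        ≤ ∑' k, Ifun k ω := by
    filter_upwards [hTae] with ω hTω
    have hXnn : ∀ k : ℕ, 0 ≤ ∫ s in ((k:ℕ):ℝ)..(((k:ℕ):ℝ) + 1), rexp (-(σ * W s ω + b * s)) :=
      fun k => intervalIntegral.integral_nonneg (by linarith) fun u _ => (Real.exp_pos _).le
    have hterm : ∀ k ∈ Finset.range ⌈T ω⌉₊,
        ENNReal.ofReal ((∫ s in ((k:ℕ):ℝ)..(((k:ℕ):ℝ) + 1),
            rexp (-(σ * W s ω + b * s))) ^ β) ≤ Ifun k ω := by
      intro k hk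
      have hkT : ((k:ℕ):ℝ) < T ω := Nat.lt_ceil.mp (Finset.mem_range.mp hk)
      set D : ℝ := ∫ s in ((k:ℕ):ℝ)..(((k:ℕ):ℝ) + 1),
        rexp (-(σ * (W s ω - W ((k:ℕ):ℝ) ω) + b * (s - ((k:ℕ):ℝ)))) with hDdef
      have hDnn : 0 ≤ D :=
        intervalIntegral.integral_nonneg (by linarith) fun u _ => (Real.exp_pos _).le
      have hDcont : Continuous fun s : ℝ =>
          rexp (-(σ * (W s ω - W ((k:ℕ):ℝ) ω) + b * (s - ((k:ℕ):ℝ)))) := by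
        apply Real.continuous_exp.comp
        apply Continuous.neg
        exact (continuous_const.mul ((hWcont ω).sub continuous_const)).add
          (continuous_const.mul (continuous_id.sub continuous_const))
      have hX : (∫ s in ((k:ℕ):ℝ)..(((k:ℕ):ℝ) + 1), rexp (-(σ * W s ω + b * s)))
          = rexp (-(σ * W ((k:ℕ):ℝ) ω + b * ((k:ℕ):ℝ))) * D := by
        rw [hDdef, ← intervalIntegral.integral_const_mul]
        apply intervalIntegral.integral_congr
        intro s _
        simp only [← Real.exp_add]
        congr 1
        ring
      have hofD : ENNReal.ofReal D = Dl k ω := by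
        rw [hDdef, intervalIntegral.integral_of_le (by linarith),
          ofReal_integral_eq_lintegral_ofReal
            ((hDcont.integrableOn_Icc).mono_set Ioc_subset_Icc_self)
            (ae_of_all _ fun s => (Real.exp_pos _).le)]
      calc ENNReal.ofReal ((∫ s in ((k:ℕ):ℝ)..(((k:ℕ):ℝ) + 1),
              rexp (-(σ * W s ω + b * s))) ^ β)
          = ENNReal.ofReal ((rexp (-(σ * W ((k:ℕ):ℝ) ω + b * ((k:ℕ):ℝ)))) ^ β * D ^ β) := by
            rw [hX, Real.mul_rpow (exp_nonneg _) hDnn]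
        _ = Ek k ω * ENNReal.ofReal (D ^ β) := by
            rw [ENNReal.ofReal_mul (Real.rpow_nonneg (exp_nonneg _) _)]
            simp only [hEkdef]
            rw [← Real.exp_mul]
            congr 3
            ring
        _ ≤ Ek k ω * (1 + Dl k ω) := by
            apply mul_le_mul_right
            calc ENNReal.ofReal (D ^ β) ≤ ENNReal.ofReal (1 + D) :=
                ENNReal.ofReal_le_ofReal (rpow_le_one_add hDnn hβ0.le hβ1)
              _ = 1 + Dl k ω := by
                rw [ENNReal.ofReal_add zero_le_one hDnn, ENNReal.ofReal_one, hofD]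
        _ = Ifun k ω := by
            simp only [hIdef]
            rw [Set.indicator_of_mem (show ω ∈ T ⁻¹' (Ioi ((k:ℕ):ℝ)) from hkT), one_mul]
    calc ENNReal.ofReal ((∫ s in (0:ℝ)..(T ω), rexp (-(σ * W s ω + b * s))) ^ β)
        ≤ ENNReal.ofReal (∑ k ∈ Finset.range ⌈T ω⌉₊,
            (∫ s in ((k:ℕ):ℝ)..(((k:ℕ):ℝ) + 1), rexp (-(σ * W s ω + b * s))) ^ β) :=
          ENNReal.ofReal_le_ofReal (pointwise_blocks (hcontω ω)
            (fun s => (Real.exp_pos _).le) hβ0 hβ1 hTω)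
      _ = ∑ k ∈ Finset.range ⌈T ω⌉₊, ENNReal.ofReal
            ((∫ s in ((k:ℕ):ℝ)..(((k:ℕ):ℝ) + 1), rexp (-(σ * W s ω + b * s))) ^ β) :=
          ENNReal.ofReal_sum_of_nonneg fun k _ => Real.rpow_nonneg (hXnn k) β
      _ ≤ ∑ k ∈ Finset.range ⌈T ω⌉₊, Ifun k ω := Finset.sum_le_sum hterm
      _ ≤ ∑' k, Ifun k ω := ENNReal.sum_le_tsum _
  -- per-block expectation bound
  have hIk : ∀ k : ℕ, ∫⁻ ω, Ifun k ω ∂P ≤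
      (1 + ENNReal.ofReal (rexp |σ ^ 2 / 2 - b|)) * ENNReal.ofReal (rexp (ρ - lam)) ^ k := by
    intro k
    have hknn : (0:ℝ) ≤ ((k:ℕ):ℝ) := Nat.cast_nonneg k
    have hg_meas : Measurable[⨆ t : ℝ, MeasurableSpace.comap (W t) Real.measurableSpace]
        (fun ω => Ek k ω * (1 + Dl k ω)) :=
      (hEk_meas _ hWs𝒢 k).mul (measurable_const.add (hDl_meas _ hWs𝒢 k))
    have hsplit : ∫⁻ ω, Ifun k ω ∂P
        = P (T ⁻¹' (Ioi ((k:ℕ):ℝ))) * ∫⁻ ω, Ek k ω * (1 + Dl k ω) ∂P := by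
      simp only [hIdef]
      rw [lintegral_mul_eq_lintegral_mul_lintegral_of_independent_measurableSpace hTle h𝒢le
        hindep (measurable_const.indicator ⟨Ioi _, measurableSet_Ioi, rfl⟩) hg_meas,
        show ∫⁻ ω, (T ⁻¹' (Ioi ((k:ℕ):ℝ))).indicator (fun _ => (1:ℝ≥0∞)) ω ∂P
          = P (T ⁻¹' (Ioi ((k:ℕ):ℝ))) from lintegral_indicator_one (hT measurableSet_Ioi)]
    have hEkval : ∫⁻ ω, Ek k ω ∂P = ENNReal.ofReal (rexp (ρ * k)) := by
      have h1 : ∀ ω, Ek k ω = ENNReal.ofReal (rexp ((-β) * (b * ((k:ℕ):ℝ))))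
          * ENNReal.ofReal (rexp ((-β * σ) * W ((k:ℕ):ℝ) ω)) := by
        intro ω
        simp only [hEkdef]
        rw [← ENNReal.ofReal_mul (exp_nonneg _), ← Real.exp_add]
        congr 2
        ring
      rw [lintegral_congr h1, lintegral_const_mul' _ _ ENNReal.ofReal_ne_top,
        hmgf0 (-β * σ) _ hknn, ← ENNReal.ofReal_mul (exp_nonneg _), ← Real.exp_add]
      congr 2
      rw [hρdef]
      ring
    have hEkDl : ∫⁻ ω, Ek k ω * Dl k ω ∂P
        ≤ ENNReal.ofReal (rexp (ρ * ((k:ℕ):ℝ))) * ENNReal.ofReal (rexp |σ ^ 2 / 2 - b|) := by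
      have h1 : ∀ ω, Ek k ω * Dl k ω = ∫⁻ s in Ioc ((k:ℕ):ℝ) (((k:ℕ):ℝ) + 1),
          Ek k ω * ENNReal.ofReal
            (rexp (-(σ * (W s ω - W ((k:ℕ):ℝ) ω) + b * (s - ((k:ℕ):ℝ))))) := by
        intro ω
        simp only [hDldef, hEkdef]
        exact (lintegral_const_mul' _ _ ENNReal.ofReal_ne_top).symm
      have hmeasprod : AEMeasurable (Function.uncurry fun ω s => Ek k ω * ENNReal.ofReal
            (rexp (-(σ * (W s ω - W ((k:ℕ):ℝ) ω) + b * (s - ((k:ℕ):ℝ))))))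
          (P.prod (volume.restrict (Ioc ((k:ℕ):ℝ) (((k:ℕ):ℝ) + 1)))) :=
        (((hEk_meas _ (fun t => hWmeas t) k).comp measurable_fst).mul
          (hjoint _ (fun t => hWmeas t) k)).aemeasurable
      have hinner : ∀ s : ℝ, ((k:ℕ):ℝ) < s → s ≤ ((k:ℕ):ℝ) + 1 →
          ∫⁻ ω, Ek k ω * ENNReal.ofReal
              (rexp (-(σ * (W s ω - W ((k:ℕ):ℝ) ω) + b * (s - ((k:ℕ):ℝ))))) ∂P
            ≤ ENNReal.ofReal (rexp (ρ * ((k:ℕ):ℝ))) * ENNReal.ofReal (rexp |σ ^ 2 / 2 - b|) := by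
        intro s hs1 hs2
        have h2 : ∀ ω, Ek k ω * ENNReal.ofReal
            (rexp (-(σ * (W s ω - W ((k:ℕ):ℝ) ω) + b * (s - ((k:ℕ):ℝ)))))
          = ENNReal.ofReal (rexp ((-β) * (b * ((k:ℕ):ℝ)) + (-(b * (s - ((k:ℕ):ℝ))))))
            * (ENNReal.ofReal (rexp ((-β * σ) * W ((k:ℕ):ℝ) ω))
              * ENNReal.ofReal (rexp ((-σ) * (W s ω - W ((k:ℕ):ℝ) ω)))) := by
          intro ω
          simp only [hEkdef]
          rw [← ENNReal.ofReal_mul (exp_nonneg _), ← ENNReal.ofReal_mul (exp_nonneg _),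
            ← ENNReal.ofReal_mul (exp_nonneg _), ← Real.exp_add, ← Real.exp_add, ← Real.exp_add]
          congr 2
          ring
        rw [lintegral_congr h2, lintegral_const_mul' _ _ ENNReal.ofReal_ne_top,
          hprod (-β * σ) (-σ) _ s hknn hs1.le,
          ← ENNReal.ofReal_mul (exp_nonneg _), ← ENNReal.ofReal_mul (exp_nonneg _),
          ← Real.exp_add, ← Real.exp_add,
          ← ENNReal.ofReal_mul (exp_nonneg _), ← Real.exp_add]
        apply ENNReal.ofReal_le_ofReal
        apply Real.exp_le_exp.mpr
        have h3 : (σ ^ 2 / 2 - b) * (s - ((k:ℕ):ℝ)) ≤ |σ ^ 2 / 2 - b| := by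
          calc (σ ^ 2 / 2 - b) * (s - ((k:ℕ):ℝ))
              ≤ |σ ^ 2 / 2 - b| * (s - ((k:ℕ):ℝ)) :=
                mul_le_mul_of_nonneg_right (le_abs_self _) (by linarith)
            _ ≤ |σ ^ 2 / 2 - b| * 1 :=
                mul_le_mul_of_nonneg_left (by linarith) (abs_nonneg _)
            _ = |σ ^ 2 / 2 - b| := mul_one _
        have h4 : (-β) * (b * ((k:ℕ):ℝ)) + (-(b * (s - ((k:ℕ):ℝ))))
            + ((-β * σ) ^ 2 * ((k:ℕ):ℝ) / 2 + (-σ) ^ 2 * (s - ((k:ℕ):ℝ)) / 2)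
            = ρ * ((k:ℕ):ℝ) + (σ ^ 2 / 2 - b) * (s - ((k:ℕ):ℝ)) := by
          rw [hρdef]
          ring
        rw [h4]
        linarith
      calc ∫⁻ ω, Ek k ω * Dl k ω ∂P
          = ∫⁻ s in Ioc ((k:ℕ):ℝ) (((k:ℕ):ℝ) + 1), ∫⁻ ω, Ek k ω * ENNReal.ofReal
              (rexp (-(σ * (W s ω - W ((k:ℕ):ℝ) ω) + b * (s - ((k:ℕ):ℝ))))) ∂P := by
            rw [lintegral_congr h1]
            exact lintegral_lintegral_swap hmeasprod
        _ ≤ ∫⁻ _ in Ioc ((k:ℕ):ℝ) (((k:ℕ):ℝ) + 1),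
            ENNReal.ofReal (rexp (ρ * ((k:ℕ):ℝ))) * ENNReal.ofReal (rexp |σ ^ 2 / 2 - b|) := by
            refine setLIntegral_mono' measurableSet_Ioc fun s hs => hinner s hs.1 hs.2
        _ = ENNReal.ofReal (rexp (ρ * ((k:ℕ):ℝ))) * ENNReal.ofReal (rexp |σ ^ 2 / 2 - b|) := by
            rw [setLIntegral_const, Real.volume_Ioc]
            norm_num
    have hgval : ∫⁻ ω, Ek k ω * (1 + Dl k ω) ∂P
        ≤ ENNReal.ofReal (rexp (ρ * ((k:ℕ):ℝ)))
          * (1 + ENNReal.ofReal (rexp |σ ^ 2 / 2 - b|)) := by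
      have h1 : ∀ ω, Ek k ω * (1 + Dl k ω) = Ek k ω + Ek k ω * Dl k ω := fun ω => by
        rw [mul_add, mul_one]
      rw [lintegral_congr h1, lintegral_add_left (hEk_meas _ (fun t => hWmeas t) k),
        mul_add, mul_one]
      exact add_le_add (le_of_eq hEkval) hEkDl
    have hpow : ENNReal.ofReal (rexp (-(lam * ((k:ℕ):ℝ)))) * ENNReal.ofReal (rexp (ρ * ((k:ℕ):ℝ)))
        = ENNReal.ofReal (rexp (ρ - lam)) ^ k := by
      rw [← ENNReal.ofReal_mul (exp_nonneg _), ← Real.exp_add,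
        ← ENNReal.ofReal_pow (exp_nonneg _), ← Real.exp_nat_mul]
      congr 1
      ring
    calc ∫⁻ ω, Ifun k ω ∂P
        = P (T ⁻¹' (Ioi ((k:ℕ):ℝ))) * ∫⁻ ω, Ek k ω * (1 + Dl k ω) ∂P := hsplit
      _ ≤ ENNReal.ofReal (rexp (-(lam * ((k:ℕ):ℝ)))) * (ENNReal.ofReal (rexp (ρ * ((k:ℕ):ℝ)))
          * (1 + ENNReal.ofReal (rexp |σ ^ 2 / 2 - b|))) := by
          rw [htail _ hknn]
          exact mul_le_mul_right hgval _
      _ = (1 + ENNReal.ofReal (rexp |σ ^ 2 / 2 - b|))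
          * (ENNReal.ofReal (rexp (-(lam * ((k:ℕ):ℝ)))) * ENNReal.ofReal (rexp (ρ * ((k:ℕ):ℝ)))) := by
          ring
      _ = (1 + ENNReal.ofReal (rexp |σ ^ 2 / 2 - b|)) * ENNReal.ofReal (rexp (ρ - lam)) ^ k := by
          rw [hpow]
  -- conclusion
  have hImeas : ∀ k : ℕ, AEMeasurable (Ifun k) P := by
    intro k
    apply Measurable.aemeasurable
    simp only [hIdef]
    exact (measurable_const.indicator (hT measurableSet_Ioi)).mul
      ((hEk_meas _ (fun t => hWmeas t) k).mul
        (measurable_const.add (hDl_meas _ (fun t => hWmeas t) k)))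
  have hr1 : ENNReal.ofReal (rexp (ρ - lam)) < 1 := by
    rw [ENNReal.ofReal_lt_one]
    refine Real.exp_lt_one_iff.mpr ?_
    have h5 := hρlam
    linarith
  calc ∫⁻ ω, ENNReal.ofReal
        ((∫ s in (0:ℝ)..(T ω), rexp (-(σ * W s ω + b * s))) ^ β) ∂P
      ≤ ∫⁻ ω, ∑' k, Ifun k ω ∂P := lintegral_mono_ae hpt
    _ = ∑' k, ∫⁻ ω, Ifun k ω ∂P := lintegral_tsum hImeas
    _ ≤ ∑' k : ℕ, (1 + ENNReal.ofReal (rexp |σ ^ 2 / 2 - b|))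
        * ENNReal.ofReal (rexp (ρ - lam)) ^ k := ENNReal.tsum_le_tsum hIk
    _ = (1 + ENNReal.ofReal (rexp |σ ^ 2 / 2 - b|))
        * ∑' k : ℕ, ENNReal.ofReal (rexp (ρ - lam)) ^ k := ENNReal.tsum_mul_left
    _ < ⊤ := by
        rw [ENNReal.tsum_geometric]
        apply ENNReal.mul_lt_top
        · exact ENNReal.add_lt_top.mpr ⟨ENNReal.one_lt_top, ENNReal.ofReal_lt_top⟩
        · rw [ENNReal.inv_lt_top]
          exact tsub_pos_of_lt hr1


end CaseB

end BMaux

/-- A standard one-dimensional Brownian motion started at `0`: each `W t` is measurable,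
paths start at `0` and are continuous, increments over `[s,t]` (for `0 ≤ s ≤ t`) are centered
Gaussian with variance `t - s`, and increments over consecutive intervals are independent. -/
def IsStandardBM {Ω : Type*} [MeasurableSpace Ω] (P : Measure Ω) (W : ℝ → Ω → ℝ) : Prop :=
  (∀ t : ℝ, Measurable (W t)) ∧
  (∀ ω, W 0 ω = 0) ∧
  (∀ ω, Continuous fun t => W t ω) ∧
  (∀ s t : ℝ, 0 ≤ s → s ≤ t →
    Measure.map (fun ω => W t ω - W s ω) P = gaussianReal 0 (Real.toNNReal (t - s))) ∧
  ∀ (n : ℕ) (u : ℕ → ℝ), Monotone u → 0 ≤ u 0 →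
    iIndepFun
      (fun i : Fin n => fun ω => W (u (i + 1)) ω - W (u i) ω) P


theorem finite_beta_moment_integral_exp_neg_V_up_to_exponential_time
    {Ω : Type*} [MeasurableSpace Ω] (P : Measure Ω) [IsProbabilityMeasure P]
    (W : ℝ → Ω → ℝ) (T : Ω → ℝ) (lam σ a β : ℝ)
    (hW : IsStandardBM P W) (hT : Measurable T) (hlam : 0 < lam)
    (hTlaw : Measure.map T P = expMeasure lam)
    (hindep : Indep (MeasurableSpace.comap T Real.measurableSpace)
      (⨆ t : ℝ, MeasurableSpace.comap (W t) Real.measurableSpace) P)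
    (hσ : 0 < σ) (hβ : 0 < β)
    (hden : 0 < 1 / 2 * σ ^ 2 * β * ((2 * a / σ ^ 2 - 1) - β) + lam)
    (hp : ∃ p : ℝ, 1 < p ∧ 0 < β / p - (2 * a / σ ^ 2 - 1)) :
    ∫⁻ ω, ENNReal.ofReal
        ((∫ s in (0:ℝ)..(T ω), Real.exp (-(σ * W s ω + (a - σ ^ 2 / 2) * s))) ^ β) ∂P < ⊤ := by
  obtain ⟨hWmeas, hW0, hWcont, hWlaw, hWind⟩ := hW
  have h1 : 1 / 2 * σ ^ 2 * β * ((2 * a / σ ^ 2 - 1) - β)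
      = β * (a - σ ^ 2 / 2) - σ ^ 2 * β ^ 2 / 2 := by
    have hσ2 : σ ^ 2 ≠ 0 := by positivity
    field_simp
  have hρlam : σ ^ 2 * β ^ 2 / 2 - β * (a - σ ^ 2 / 2) < lam := by
    rw [h1] at hden
    linarith
  have htail : ∀ s : ℝ, 0 ≤ s →
      P (T ⁻¹' (Ioi s)) = ENNReal.ofReal (Real.exp (-(lam * s))) := fun s hs =>
    BMaux.lintegral_exp_tail P T hT hlam hTlaw hs
  have hTae : ∀ᵐ ω ∂P, 0 ≤ T ω := BMaux.T_nonneg_ae P T hT hTlaw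
  have hmgf : ∀ (c s : ℝ), 0 ≤ s →
      ∫⁻ ω, ENNReal.ofReal (Real.exp (c * W s ω)) ∂P
        = ENNReal.ofReal (Real.exp (c ^ 2 * s / 2)) := by
    intro c s hs
    have h2 : (fun ω => W s ω - W 0 ω) = W s := funext fun ω => by rw [hW0 ω, sub_zero]
    have h3 := hWlaw 0 s le_rfl hs
    rw [h2, sub_zero] at h3
    rw [BMaux.lintegral_exp_gaussian P (W s) (hWmeas s) _ h3 c]
    congr 3
    rw [Real.coe_toNNReal _ hs]
  have hWun : Measurable (Function.uncurry W) :=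
    measurable_uncurry_of_continuous_of_measurable hWcont hWmeas
  rcases le_or_gt 1 β with hβ1 | hβ1
  · have hδpos : 0 < (lam - (σ ^ 2 * β ^ 2 / 2 - β * (a - σ ^ 2 / 2))) / (2 * β) :=
      div_pos (by linarith) (by linarith)
    have hcpos : 0 < lam
        - β * ((lam - (σ ^ 2 * β ^ 2 / 2 - β * (a - σ ^ 2 / 2))) / (2 * β))
        + β * (a - σ ^ 2 / 2) - β ^ 2 * σ ^ 2 / 2 := by
      have hβ0 : β ≠ 0 := by linarith
      have h2 : β * ((lam - (σ ^ 2 * β ^ 2 / 2 - β * (a - σ ^ 2 / 2))) / (2 * β))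
          = (lam - (σ ^ 2 * β ^ 2 / 2 - β * (a - σ ^ 2 / 2))) / 2 := by
        field_simp
      have h3 : lam - (lam - (σ ^ 2 * β ^ 2 / 2 - β * (a - σ ^ 2 / 2))) / 2
          + β * (a - σ ^ 2 / 2) - β ^ 2 * σ ^ 2 / 2
          = (lam - (σ ^ 2 * β ^ 2 / 2 - β * (a - σ ^ 2 / 2))) / 2 := by ring
      rw [h2, h3]
      linarith
    exact BMaux.caseA P W T lam σ (a - σ ^ 2 / 2) β _ hWmeas hWcont hWun hT hTae hindep
      hmgf htail hβ1 hδpos hcpos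
  · exact BMaux.caseB P W T lam σ (a - σ ^ 2 / 2) β hWmeas hW0 hWcont hT hTae hindep
      hWlaw hWind htail hβ hβ1.le hρlam
end
end

section
/- Let ((M_k, Q_k))_{k≥1} be an i.i.d. sequence of pairs of real random variables with M_k > 0 almost surely, and suppose that for some p ∈ (0,1] one has r := E[M_1^p] < 1 and E[|Q_1|^p] < ∞. Then E[ (∑_{n≥1} |M_1 ⋯ M_{n−1} Q_n|)^p ] ≤ E[|Q_1|^p]/(1 − r) < ∞, and in particular the series ∑_{n≥1} M_1 ⋯ M_{n−1} Q_n (with the empty product for n = 1 equal to 1) converges absolutely almost surely. -/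
open MeasureTheory ProbabilityTheory

/-- Subadditivity of `x ↦ x ^ p` for `p ∈ (0,1]`, finite-sum version, in `ℝ≥0∞`. -/
lemma aux_finset_sum_rpow_le {p : ℝ} (hp0 : 0 < p) (hp1 : p ≤ 1)
    (s : Finset ℕ) (f : ℕ → ENNReal) :
    (∑ i ∈ s, f i) ^ p ≤ ∑ i ∈ s, (f i) ^ p := by
  classical
  induction s using Finset.induction_on with
  | empty => simp [ENNReal.zero_rpow_of_pos hp0]
  | insert _ _ hnot ih =>
    rename_i a t
    rw [Finset.sum_insert hnot, Finset.sum_insert hnot]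
    calc (f a + ∑ i ∈ t, f i) ^ p ≤ (f a) ^ p + (∑ i ∈ t, f i) ^ p :=
          ENNReal.rpow_add_le_add_rpow _ _ hp0.le hp1
      _ ≤ (f a) ^ p + ∑ i ∈ t, (f i) ^ p := add_le_add_right ih _

/-- Subadditivity of `x ↦ x ^ p` for `p ∈ (0,1]`, `tsum` version, in `ℝ≥0∞`. -/
lemma aux_tsum_rpow_le {p : ℝ} (hp0 : 0 < p) (hp1 : p ≤ 1) (f : ℕ → ENNReal) :
    (∑' n, f n) ^ p ≤ ∑' n, (f n) ^ p := by
  have hT : ∀ s : Finset ℕ, (∑ i ∈ s, f i) ^ p ≤ ∑' n, (f n) ^ p := fun s =>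
    (aux_finset_sum_rpow_le hp0 hp1 s f).trans (ENNReal.sum_le_tsum s)
  set T := ∑' n, (f n) ^ p with hTdef
  have hsum_le : ∑' n, f n ≤ T ^ (1 / p) := by
    rw [ENNReal.tsum_eq_iSup_sum]
    refine iSup_le fun s => ?_
    have h1 : ((∑ i ∈ s, f i) ^ p) ^ (1 / p) ≤ T ^ (1 / p) :=
      ENNReal.rpow_le_rpow (hT s) (by positivity)
    rwa [← ENNReal.rpow_mul, mul_one_div_cancel hp0.ne', ENNReal.rpow_one] at h1
  calc (∑' n, f n) ^ p ≤ (T ^ (1 / p)) ^ p := ENNReal.rpow_le_rpow hsum_le hp0.le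
    _ = T := by rw [← ENNReal.rpow_mul, one_div_mul_cancel hp0.ne', ENNReal.rpow_one]

/-- Moment bound and a.s. absolute convergence for the perpetuity series
`∑ M_1 ⋯ M_{n-1} Q_n` built from an i.i.d. sequence of pairs `(M_k, Q_k)` (indexed here by
`ℕ`, so that the `n`-th term is `(∏_{j<n} M_j) Q_n`, the empty product being `1`). -/
theorem perpetuity_series_moment_bound_and_convergence
    {Ω : Type*} [MeasurableSpace Ω] (P : Measure Ω) [IsProbabilityMeasure P]
    (R : ℕ → Ω → ℝ × ℝ) (p : ℝ)
    (hmeas : ∀ k, Measurable (R k))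
    (hindep : iIndepFun R P)
    (hident : ∀ k, Measure.map (R k) P = Measure.map (R 0) P)
    (hMpos : ∀ k, ∀ᵐ ω ∂P, 0 < (R k ω).1)
    (hp0 : 0 < p) (hp1 : p ≤ 1)
    (hM : ∫⁻ ω, ENNReal.ofReal ((R 0 ω).1 ^ p) ∂P < 1)
    (hQ : ∫⁻ ω, ENNReal.ofReal (|(R 0 ω).2| ^ p) ∂P < ⊤) :
    (∫⁻ ω, (∑' n : ℕ, ENNReal.ofReal ((∏ j ∈ Finset.range n, (R j ω).1) * |(R n ω).2|)) ^ p ∂P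
        ≤ (∫⁻ ω, ENNReal.ofReal (|(R 0 ω).2| ^ p) ∂P)
            / (1 - ∫⁻ ω, ENNReal.ofReal ((R 0 ω).1 ^ p) ∂P)) ∧
    (∫⁻ ω, (∑' n : ℕ, ENNReal.ofReal ((∏ j ∈ Finset.range n, (R j ω).1) * |(R n ω).2|)) ^ p ∂P
        < ⊤) ∧
    (∀ᵐ ω ∂P, Summable fun n : ℕ => |(∏ j ∈ Finset.range n, (R j ω).1) * (R n ω).2|) := by
  classical
  set r : ENNReal := ∫⁻ ω, ENNReal.ofReal ((R 0 ω).1 ^ p) ∂P with hr_def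
  set c : ENNReal := ∫⁻ ω, ENNReal.ofReal (|(R 0 ω).2| ^ p) ∂P with hc_def
  -- the two basic measurable functions of a pair
  set gM : ℝ × ℝ → ENNReal := fun x => ENNReal.ofReal (x.1 ^ p) with hgM_def
  set gQ : ℝ × ℝ → ENNReal := fun x => ENNReal.ofReal (|x.2| ^ p) with hgQ_def
  have hgM_meas : Measurable gM :=
    ENNReal.measurable_ofReal.comp
      ((Real.continuous_rpow_const hp0.le).measurable.comp measurable_fst)
  have hgQ_meas : Measurable gQ :=
    ENNReal.measurable_ofReal.comp
      ((Real.continuous_rpow_const hp0.le).measurable.comp measurable_snd.abs)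
  -- identical distribution consequences
  have hrk : ∀ k, ∫⁻ ω, gM (R k ω) ∂P = r := by
    intro k
    rw [hr_def]
    have h1 : ∫⁻ ω, gM (R k ω) ∂P = ∫⁻ x, gM x ∂(Measure.map (R k) P) :=
      (lintegral_map hgM_meas (hmeas k)).symm
    have h2 : ∫⁻ x, gM x ∂(Measure.map (R 0) P) = ∫⁻ ω, gM (R 0 ω) ∂P :=
      lintegral_map hgM_meas (hmeas 0)
    rw [h1, hident k, h2]
  have hck : ∀ k, ∫⁻ ω, gQ (R k ω) ∂P = c := by
    intro k
    rw [hc_def]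
    have h1 : ∫⁻ ω, gQ (R k ω) ∂P = ∫⁻ x, gQ x ∂(Measure.map (R k) P) :=
      (lintegral_map hgQ_meas (hmeas k)).symm
    have h2 : ∫⁻ x, gQ x ∂(Measure.map (R 0) P) = ∫⁻ ω, gQ (R 0 ω) ∂P :=
      lintegral_map hgQ_meas (hmeas 0)
    rw [h1, hident k, h2]
  -- integral of products of gM's
  have hprodM : ∀ n : ℕ, ∫⁻ ω, ∏ j ∈ Finset.range n, gM (R j ω) ∂P = r ^ n := by
    intro n
    induction n with
    | zero => simp
    | succ n ih =>
      have hfam : iIndepFun (fun j => gM ∘ R j) P :=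
        hindep.comp (fun _ => gM) (fun _ => hgM_meas)
      have hind : IndepFun (∏ j ∈ Finset.range n, gM ∘ R j) (gM ∘ R n) P :=
        hfam.indepFun_prod_range_succ (fun j => hgM_meas.comp (hmeas j)) n
      have hmul := lintegral_mul_eq_lintegral_mul_lintegral_of_indepFun
        (f := ∏ j ∈ Finset.range n, gM ∘ R j) (g := gM ∘ R n)
        (by rw [Finset.prod_fn]; exact Finset.measurable_prod _ fun j _ => hgM_meas.comp (hmeas j))
        (hgM_meas.comp (hmeas n)) hind
      have heq : ∀ ω, (∏ j ∈ Finset.range n, gM ∘ R j) ω = ∏ j ∈ Finset.range n, gM (R j ω) :=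
        fun ω => by simp [Finset.prod_apply]
      calc ∫⁻ ω, ∏ j ∈ Finset.range (n + 1), gM (R j ω) ∂P
          = ∫⁻ ω, (∏ j ∈ Finset.range n, gM ∘ R j) ω * (gM ∘ R n) ω ∂P := by
            refine lintegral_congr fun ω => ?_
            rw [Finset.prod_range_succ, heq ω]; rfl
        _ = (∫⁻ ω, (∏ j ∈ Finset.range n, gM ∘ R j) ω ∂P) * ∫⁻ ω, (gM ∘ R n) ω ∂P := hmul
        _ = r ^ n * r := by
            rw [lintegral_congr heq, ih]
            congr 1
            exact hrk n
        _ = r ^ (n + 1) := (pow_succ r n).symm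
  -- integral of products of gM's times gQ
  have hkey : ∀ n : ℕ,
      ∫⁻ ω, (∏ j ∈ Finset.range n, gM (R j ω)) * gQ (R n ω) ∂P = r ^ n * c := by
    intro n
    set F : ℕ → Ω → ENNReal := fun j => (if j = n then gQ else gM) ∘ R j with hF_def
    have hFmeas : ∀ j, Measurable (F j) := fun j => by
      by_cases h : j = n
      · subst h; simpa [hF_def] using hgQ_meas.comp (hmeas j)
      · simpa [hF_def, h] using hgM_meas.comp (hmeas j)
    have hfam : iIndepFun F P :=
      hindep.comp (fun j => if j = n then gQ else gM)
        (fun j => by by_cases h : j = n <;> simp [h, hgQ_meas, hgM_meas])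
    have hind : IndepFun (∏ j ∈ Finset.range n, F j) (F n) P :=
      hfam.indepFun_finsetProd_of_notMem hFmeas (Finset.notMem_range_self)
    have hmul := lintegral_mul_eq_lintegral_mul_lintegral_of_indepFun
      (f := ∏ j ∈ Finset.range n, F j) (g := F n)
      (by rw [Finset.prod_fn]; exact Finset.measurable_prod _ fun j _ => hFmeas j) (hFmeas n) hind
    have hFn : F n = gQ ∘ R n := by simp [hF_def]
    have heqF : ∀ ω, (∏ j ∈ Finset.range n, F j) ω = ∏ j ∈ Finset.range n, gM (R j ω) := by
      intro ω
      rw [Finset.prod_apply]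
      refine Finset.prod_congr rfl fun j hj => ?_
      have : j ≠ n := Nat.ne_of_lt (Finset.mem_range.mp hj)
      simp [hF_def, this]
    calc ∫⁻ ω, (∏ j ∈ Finset.range n, gM (R j ω)) * gQ (R n ω) ∂P
        = ∫⁻ ω, (∏ j ∈ Finset.range n, F j) ω * (F n) ω ∂P := by
          refine lintegral_congr fun ω => ?_
          rw [heqF ω, hFn]; rfl
      _ = (∫⁻ ω, (∏ j ∈ Finset.range n, F j) ω ∂P) * ∫⁻ ω, (F n) ω ∂P := hmul
      _ = r ^ n * c := by
          rw [lintegral_congr heqF, hprodM n]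
          congr 1
          rw [hFn]
          exact hck n
  -- almost-everywhere positivity of all the M's
  have hpos : ∀ᵐ ω ∂P, ∀ k, 0 < (R k ω).1 := ae_all_iff.mpr hMpos
  -- a.e. identification of the n-th term's p-th power
  have hterm_ae : ∀ n : ℕ, (fun ω =>
      (ENNReal.ofReal ((∏ j ∈ Finset.range n, (R j ω).1) * |(R n ω).2|)) ^ p)
      =ᵐ[P] fun ω => (∏ j ∈ Finset.range n, gM (R j ω)) * gQ (R n ω) := by
    intro n
    filter_upwards [hpos] with ω hω
    have hMn : ∀ j ∈ Finset.range n, (0:ℝ) ≤ (R j ω).1 := fun j _ => (hω j).le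
    have hprod_nonneg : (0:ℝ) ≤ ∏ j ∈ Finset.range n, (R j ω).1 :=
      Finset.prod_nonneg hMn
    have hb_nonneg : (0:ℝ) ≤ (∏ j ∈ Finset.range n, (R j ω).1) * |(R n ω).2| :=
      mul_nonneg hprod_nonneg (abs_nonneg _)
    rw [ENNReal.ofReal_rpow_of_nonneg hb_nonneg hp0.le,
      Real.mul_rpow hprod_nonneg (abs_nonneg _),
      ← Real.finset_prod_rpow _ _ hMn p,
      ENNReal.ofReal_mul (Finset.prod_nonneg fun j hj => Real.rpow_nonneg (hMn j hj) p),
      ENNReal.ofReal_prod_of_nonneg (fun j hj => Real.rpow_nonneg (hMn j hj) p)]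
  -- measurability of the terms
  have hb_meas : ∀ n : ℕ, Measurable fun ω =>
      ENNReal.ofReal ((∏ j ∈ Finset.range n, (R j ω).1) * |(R n ω).2|) := fun n =>
    ENNReal.measurable_ofReal.comp
      ((Finset.measurable_prod _ fun j _ => (hmeas j).fst).mul ((hmeas n).snd.abs))
  -- main bound
  have hmain : ∫⁻ ω, (∑' n : ℕ,
      ENNReal.ofReal ((∏ j ∈ Finset.range n, (R j ω).1) * |(R n ω).2|)) ^ p ∂P
      ≤ c / (1 - r) := by
    calc ∫⁻ ω, (∑' n : ℕ,
          ENNReal.ofReal ((∏ j ∈ Finset.range n, (R j ω).1) * |(R n ω).2|)) ^ p ∂P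
        ≤ ∫⁻ ω, ∑' n : ℕ,
          (ENNReal.ofReal ((∏ j ∈ Finset.range n, (R j ω).1) * |(R n ω).2|)) ^ p ∂P := by
          exact lintegral_mono fun ω => aux_tsum_rpow_le hp0 hp1 _
      _ = ∑' n : ℕ, ∫⁻ ω,
          (ENNReal.ofReal ((∏ j ∈ Finset.range n, (R j ω).1) * |(R n ω).2|)) ^ p ∂P :=
          lintegral_tsum fun n => ((hb_meas n).pow_const p).aemeasurable
      _ = ∑' n : ℕ, ∫⁻ ω, (∏ j ∈ Finset.range n, gM (R j ω)) * gQ (R n ω) ∂P := by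
          exact tsum_congr fun n => lintegral_congr_ae (hterm_ae n)
      _ = ∑' n : ℕ, r ^ n * c := tsum_congr hkey
      _ = (∑' n : ℕ, r ^ n) * c := ENNReal.tsum_mul_right
      _ = (1 - r)⁻¹ * c := by rw [ENNReal.tsum_geometric]
      _ = c / (1 - r) := (ENNReal.div_eq_inv_mul).symm
  have hr_sub_ne : (1 : ENNReal) - r ≠ 0 := by
    intro h
    exact absurd (tsub_eq_zero_iff_le.mp h) (not_le.mpr hM)
  have hfin : c / (1 - r) < ⊤ := ENNReal.div_lt_top hQ.ne hr_sub_ne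
  have hlt : ∫⁻ ω, (∑' n : ℕ,
      ENNReal.ofReal ((∏ j ∈ Finset.range n, (R j ω).1) * |(R n ω).2|)) ^ p ∂P < ⊤ :=
    lt_of_le_of_lt hmain hfin
  refine ⟨hmain, hlt, ?_⟩
  -- a.s. summability
  have hF_meas : Measurable fun ω => (∑' n : ℕ,
      ENNReal.ofReal ((∏ j ∈ Finset.range n, (R j ω).1) * |(R n ω).2|)) ^ p :=
    (Measurable.ennreal_tsum hb_meas).pow_const p
  have hae := ae_lt_top hF_meas hlt.ne
  filter_upwards [hae, hpos] with ω hω hωpos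
  have htsum_fin : (∑' n : ℕ,
      ENNReal.ofReal ((∏ j ∈ Finset.range n, (R j ω).1) * |(R n ω).2|)) ≠ ⊤ := by
    intro h
    rw [h, ENNReal.top_rpow_of_pos hp0] at hω
    exact absurd hω (lt_irrefl _)
  have hsum : Summable fun n : ℕ =>
      (ENNReal.ofReal ((∏ j ∈ Finset.range n, (R j ω).1) * |(R n ω).2|)).toReal :=
    ENNReal.summable_toReal htsum_fin
  have heq : ∀ n : ℕ,
      (ENNReal.ofReal ((∏ j ∈ Finset.range n, (R j ω).1) * |(R n ω).2|)).toReal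
      = |(∏ j ∈ Finset.range n, (R j ω).1) * (R n ω).2| := by
    intro n
    have hprod_nonneg : (0:ℝ) ≤ ∏ j ∈ Finset.range n, (R j ω).1 :=
      Finset.prod_nonneg fun j _ => (hωpos j).le
    rw [ENNReal.toReal_ofReal (mul_nonneg hprod_nonneg (abs_nonneg _)), abs_mul,
      abs_of_nonneg hprod_nonneg]
  exact (summable_congr heq).mp hsum
end

section
/- Let σ₀, σ₁ > 0, λ⁰¹, λ¹⁰ > 0 and 0 < β₀ < β₁. Define D₀(q) := λ⁰¹ + (1/2)σ₀²q(β₀ − q) and D₁(q) := λ¹⁰ + (1/2)σ₁²q(β₁ − q). Then there exists exactly one β ∈ (β₀, β₁) such that D₀(β) > 0 and D₀(β)·D₁(β) = λ⁰¹λ¹⁰. -/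
/-- Abstract core of the uniqueness argument (strict concavity of `log D₀ + log D₁`,
done with elementary algebra). -/
lemma decay_core (l01 l10 a b u v w P0 Q0 QB D0 D1 : ℝ)
    (hl01 : 0 < l01) (hl10 : 0 < l10) (ha : 0 < a) (hb : 0 < b)
    (hu : 0 < u) (hv : 0 < v) (hw : w = u + v)
    (hP0 : 0 < P0) (hQ0 : 0 < Q0) (hQB : l10 < QB)
    (h1 : w * D0 = u * l01 + v * P0 + a * u * v * w)
    (h2 : w * D1 = u * QB + v * Q0 + b * u * v * w)
    (hx : D0 * D1 = l01 * l10) (hy : P0 * Q0 = l01 * l10) : False := by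
  have hw' : 0 < w := by linarith
  have hprod : (u * l01 + v * P0 + a * u * v * w) * (u * QB + v * Q0 + b * u * v * w)
      = w ^ 2 * (l01 * l10) := by
    have h3 : (w * D0) * (w * D1) = w ^ 2 * (D0 * D1) := by ring
    rw [h1, h2, hx] at h3
    linarith [h3]
  -- cross term inequality
  have hcross : l01 * Q0 + P0 * QB > 2 * (l01 * l10) := by
    have hxy : (l01 * Q0) * (P0 * QB) > (l01 * l10) * (l01 * l10) := by
      have : (l01 * Q0) * (P0 * QB) = (l01 * QB) * (P0 * Q0) := by ring
      rw [this, hy]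
      have : l01 * l10 < l01 * QB := by nlinarith
      nlinarith [mul_pos hl01 hl10]
    nlinarith [sq_nonneg (l01 * Q0 - P0 * QB), mul_pos (mul_pos hl01 hQ0) (mul_pos hP0 (lt_trans hl10 hQB)),
      mul_pos hl01 hQ0, mul_pos hP0 (lt_trans hl10 hQB), mul_pos hl01 hl10]
  have h3 : u ^ 2 * (l01 * QB) + v ^ 2 * (P0 * Q0) + u * v * (l01 * Q0 + P0 * QB)
      > (u ^ 2 + 2 * u * v + v ^ 2) * (l01 * l10) := by
    have hQBl : l01 * l10 < l01 * QB := by nlinarith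
    nlinarith [mul_pos hu hv, pow_pos hu 2, pow_pos hv 2, hy]
  have h4 : (u * l01 + v * P0 + a * u * v * w) * (u * QB + v * Q0 + b * u * v * w)
      > u ^ 2 * (l01 * QB) + v ^ 2 * (P0 * Q0) + u * v * (l01 * Q0 + P0 * QB) := by
    have e1 : 0 < b * u * v * w * (u * l01 + v * P0) := by
      have : 0 < u * l01 + v * P0 := by positivity
      positivity
    have e2 : 0 < a * u * v * w * (u * QB + v * Q0) := by
      have hQBpos : 0 < QB := lt_trans hl10 hQB
      have : 0 < u * QB + v * Q0 := by positivity
      positivity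
    have e3 : 0 < a * b * (u * v * w) ^ 2 := by positivity
    nlinarith [e1, e2, e3]
  have hw2 : w ^ 2 * (l01 * l10) = (u ^ 2 + 2 * u * v + v ^ 2) * (l01 * l10) := by
    rw [hw]; ring
  linarith

/-- Any two solutions in the open interval coincide. -/
lemma decay_aux (σ0 σ1 l01 l10 β0 β1 x y : ℝ)
    (hσ0 : 0 < σ0) (hσ1 : 0 < σ1) (hl01 : 0 < l01) (hl10 : 0 < l10)
    (hβ0 : 0 < β0) (hβ01 : β0 < β1)
    (hx0 : β0 < x) (hxy : x < y) (hy1 : y < β1)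
    (hDy : 0 < l01 + 1 / 2 * σ0 ^ 2 * y * (β0 - y))
    (hex : (l01 + 1 / 2 * σ0 ^ 2 * x * (β0 - x)) * (l10 + 1 / 2 * σ1 ^ 2 * x * (β1 - x))
      = l01 * l10)
    (hey : (l01 + 1 / 2 * σ0 ^ 2 * y * (β0 - y)) * (l10 + 1 / 2 * σ1 ^ 2 * y * (β1 - y))
      = l01 * l10) : False := by
  have hy0 : 0 < y := by linarith
  have hQ0 : 0 < l10 + 1 / 2 * σ1 ^ 2 * y * (β1 - y) := by
    have := mul_pos (mul_pos (by positivity : (0:ℝ) < 1 / 2 * σ1 ^ 2) hy0)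
      (by linarith : (0:ℝ) < β1 - y)
    linarith
  have hQB : l10 < l10 + 1 / 2 * σ1 ^ 2 * β0 * (β1 - β0) := by
    have := mul_pos (mul_pos (by positivity : (0:ℝ) < 1 / 2 * σ1 ^ 2) hβ0)
      (by linarith : (0:ℝ) < β1 - β0)
    linarith
  exact decay_core l01 l10 (1 / 2 * σ0 ^ 2) (1 / 2 * σ1 ^ 2) (y - x) (x - β0) (y - β0)
    (l01 + 1 / 2 * σ0 ^ 2 * y * (β0 - y)) (l10 + 1 / 2 * σ1 ^ 2 * y * (β1 - y))
    (l10 + 1 / 2 * σ1 ^ 2 * β0 * (β1 - β0))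
    (l01 + 1 / 2 * σ0 ^ 2 * x * (β0 - x)) (l10 + 1 / 2 * σ1 ^ 2 * x * (β1 - x))
    hl01 hl10 (by positivity) (by positivity)
    (by linarith) (by linarith) (by ring)
    hDy hQ0 hQB (by ring) (by ring) hex hey

/-- Existence and uniqueness of the decay exponent `β ∈ (β₀, β₁)`: the unique point where
`D₀(β) > 0` and `D₀(β)·D₁(β) = λ⁰¹λ¹⁰`, i.e. where the moment generating function equals `1`. -/
theorem decay_exponent_exists_unique
    (σ0 σ1 l01 l10 β0 β1 : ℝ)
    (hσ0 : 0 < σ0) (hσ1 : 0 < σ1) (hl01 : 0 < l01) (hl10 : 0 < l10)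
    (hβ0 : 0 < β0) (hβ01 : β0 < β1) :
    ∃! β : ℝ, β ∈ Set.Ioo β0 β1 ∧
      0 < l01 + 1 / 2 * σ0 ^ 2 * β * (β0 - β) ∧
      (l01 + 1 / 2 * σ0 ^ 2 * β * (β0 - β)) * (l10 + 1 / 2 * σ1 ^ 2 * β * (β1 - β))
        = l01 * l10 := by
  set g : ℝ → ℝ := fun q =>
    (l01 + 1 / 2 * σ0 ^ 2 * q * (β0 - q)) * (l10 + 1 / 2 * σ1 ^ 2 * q * (β1 - q)) with hg
  have hcont : ContinuousOn g (Set.Icc β0 β1) := by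
    apply Continuous.continuousOn; fun_prop
  have hgβ0 : l01 * l10 < g β0 := by
    have hc := mul_pos (mul_pos (by positivity : (0:ℝ) < 1 / 2 * σ1 ^ 2) hβ0)
      (by linarith : (0:ℝ) < β1 - β0)
    simp only [hg]; nlinarith [mul_pos hl01 hc]
  have hgβ1 : g β1 < l01 * l10 := by
    have hd := mul_pos (mul_pos (by positivity : (0:ℝ) < 1 / 2 * σ0 ^ 2)
      (by linarith : (0:ℝ) < β1)) (by linarith : (0:ℝ) < β1 - β0)
    simp only [hg]; nlinarith [mul_pos hl10 hd]
  have hmem : l01 * l10 ∈ Set.Ioo (g β1) (g β0) := ⟨hgβ1, hgβ0⟩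
  obtain ⟨β, hβmem, hgβ⟩ := intermediate_value_Ioo' (le_of_lt hβ01) hcont hmem
  have hβpos : 0 < β := lt_trans hβ0 hβmem.1
  have hD1 : 0 < l10 + 1 / 2 * σ1 ^ 2 * β * (β1 - β) := by
    have := mul_pos (mul_pos (by positivity : (0:ℝ) < 1 / 2 * σ1 ^ 2) hβpos)
      (by linarith [hβmem.2] : (0:ℝ) < β1 - β)
    linarith
  have hD0 : 0 < l01 + 1 / 2 * σ0 ^ 2 * β * (β0 - β) := by
    by_contra h
    push_neg at h
    have : g β ≤ 0 := by
      simp only [hg]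
      exact mul_nonpos_of_nonpos_of_nonneg h (le_of_lt hD1)
    nlinarith [mul_pos hl01 hl10]
  refine ⟨β, ⟨hβmem, hD0, hgβ⟩, ?_⟩
  rintro y ⟨hymem, hyD0, hyeq⟩
  rcases lt_trichotomy y β with h | h | h
  · exact (decay_aux σ0 σ1 l01 l10 β0 β1 y β hσ0 hσ1 hl01 hl10 hβ0 hβ01
      hymem.1 h hβmem.2 hD0 hyeq hgβ).elim
  · exact h
  · exact (decay_aux σ0 σ1 l01 l10 β0 β1 β y hσ0 hσ1 hl01 hl10 hβ0 hβ01
      hβmem.1 h hymem.2 hyD0 hgβ hyeq).elim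
end

section
/- Let W and W' be independent standard one-dimensional Brownian motions, and let T₀, T₁ be exponentially distributed random variables with parameters λ⁰¹ > 0 and λ¹⁰ > 0 respectively, with W, W', T₀, T₁ mutually independent. Let σ₀, σ₁ > 0, a₀, a₁ ∈ ℝ, set β_i := 2a_i/σ_i² − 1, and define M := exp( −(σ₀ W_{T₀} + (a₀ − σ₀²/2) T₀) − (σ₁ W'_{T₁} + (a₁ − σ₁²/2) T₁) ). Assume 0 < β₀ < β₁ and let β ∈ (β₀, β₁) satisfy σ₀²σ₁² β (β₀ − β)(β₁ − β) + 2σ₀²(β₀ − β)λ¹⁰ + 2σ₁²(β₁ − β)λ⁰¹ = 0. Then there exists ε > 0 such that E[M^{β+ε}] < ∞; in particular E[M^β (ln M)^+] < ∞. -/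
open MeasureTheory ProbabilityTheory Real
open scoped NNReal ENNReal



lemma lintegral_exp_gaussianReal (c : ℝ) (v : ℝ≥0) :
    ∫⁻ x, ENNReal.ofReal (Real.exp (c * x)) ∂(gaussianReal 0 v)
      = ENNReal.ofReal (Real.exp (c ^ 2 * (v : ℝ) / 2)) := by
  rcases eq_or_ne v 0 with hv | hv
  · simp [hv, gaussianReal_zero_var, lintegral_dirac]
  · have hv' : (0 : ℝ) < (v : ℝ) := by exact_mod_cast pos_iff_ne_zero.mpr hv
    rw [gaussianReal_of_var_ne_zero _ hv,
      lintegral_withDensity_eq_lintegral_mul _ (measurable_gaussianPDF _ _)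
        (by exact (Real.measurable_exp.comp (measurable_const.mul measurable_id)).ennreal_ofReal)]
    have hpt : ∀ x : ℝ, (gaussianPDF 0 v * fun x => ENNReal.ofReal (Real.exp (c * x))) x
        = ENNReal.ofReal (Real.exp (c ^ 2 * (v : ℝ) / 2)) * gaussianPDF (c * v) v x := by
      intro x
      have key : Real.exp (-(x - 0) ^ 2 / (2 * (v : ℝ))) * Real.exp (c * x)
          = Real.exp (c ^ 2 * (v : ℝ) / 2) * Real.exp (-(x - c * v) ^ 2 / (2 * (v : ℝ))) := by
        rw [← Real.exp_add, ← Real.exp_add]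
        congr 1
        field_simp
        ring
      simp only [Pi.mul_apply, gaussianPDF, ← ENNReal.ofReal_mul (gaussianPDFReal_nonneg _ _ _),
        ← ENNReal.ofReal_mul (Real.exp_nonneg _)]
      congr 1
      calc gaussianPDFReal 0 v x * Real.exp (c * x)
          = (Real.sqrt (2 * π * v))⁻¹ * (Real.exp (-(x - 0) ^ 2 / (2 * (v : ℝ))) * Real.exp (c * x)) := by
            rw [gaussianPDFReal]; ring
        _ = (Real.sqrt (2 * π * v))⁻¹ * (Real.exp (c ^ 2 * (v : ℝ) / 2)
              * Real.exp (-(x - c * v) ^ 2 / (2 * (v : ℝ)))) := by rw [key]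
        _ = Real.exp (c ^ 2 * (v : ℝ) / 2) * gaussianPDFReal (c * v) v x := by
            rw [gaussianPDFReal]; ring
    rw [lintegral_congr hpt, lintegral_const_mul _ (measurable_gaussianPDF _ _),
      lintegral_gaussianPDF_eq_one _ hv, mul_one]


lemma lintegral_exp_expMeasure {l s : ℝ} (hl : 0 < l) (hs : s < l) :
    ∫⁻ t, ENNReal.ofReal (Real.exp (s * t)) ∂(expMeasure l) < ⊤ := by
  have hint : IntegrableOn (fun t => l * Real.exp (-(l - s) * t)) (Set.Ici 0) volume := by
    rw [integrableOn_Ici_iff_integrableOn_Ioi]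
    exact (exp_neg_integrableOn_Ioi 0 (by linarith)).const_mul l
  have hind : Integrable ((Set.Ici (0:ℝ)).indicator fun t => l * Real.exp (-(l - s) * t)) volume :=
    hint.integrable_indicator measurableSet_Ici
  have hfin : ∫⁻ t, ENNReal.ofReal
      ((Set.Ici (0:ℝ)).indicator (fun t => l * Real.exp (-(l - s) * t)) t) ∂volume < ⊤ :=
    (hasFiniteIntegral_iff_ofReal (ae_of_all _ fun t =>
      Set.indicator_nonneg (fun y _ => by positivity) t)).1 hind.hasFiniteIntegral
  have hpt : ∀ t : ℝ, (exponentialPDF l * fun t => ENNReal.ofReal (Real.exp (s * t))) t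
      = ENNReal.ofReal ((Set.Ici (0:ℝ)).indicator (fun t => l * Real.exp (-(l - s) * t)) t) := by
    intro t
    rcases le_or_gt 0 t with ht | ht
    · rw [Pi.mul_apply, exponentialPDF_of_nonneg ht, Set.indicator_of_mem (Set.mem_Ici.mpr ht),
        ← ENNReal.ofReal_mul (by positivity), mul_assoc, ← Real.exp_add]
      have : -(l * t) + s * t = -(l - s) * t := by ring
      rw [this]
    · rw [Pi.mul_apply, exponentialPDF_of_neg ht, zero_mul,
        Set.indicator_of_notMem (by simpa using ht), ENNReal.ofReal_zero]
  have : ∫⁻ t, ENNReal.ofReal (Real.exp (s * t)) ∂(expMeasure l)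
      = ∫⁻ t, ENNReal.ofReal
        ((Set.Ici (0:ℝ)).indicator (fun t => l * Real.exp (-(l - s) * t)) t) ∂volume := by
    show ∫⁻ t, ENNReal.ofReal (Real.exp (s * t)) ∂(volume.withDensity (gammaPDF 1 l)) = _
    rw [lintegral_withDensity_eq_lintegral_mul volume
      (f := gammaPDF 1 l) (g := fun t => ENNReal.ofReal (Real.exp (s * t)))
      ((measurable_gammaPDFReal 1 l).ennreal_ofReal) (by fun_prop)]
    exact lintegral_congr hpt
  rw [this]
  exact hfin


lemma lintegral_pair_indep {Ω : Type*} {mΩ : MeasurableSpace Ω} {G : MeasurableSpace Ω}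
    (hGle : G ≤ mΩ) (P : @Measure Ω mΩ) [IsProbabilityMeasure P]
    {T : Ω → ℝ} (hT : @Measurable Ω ℝ mΩ Real.measurableSpace T)
    (hindep : @Indep Ω G (MeasurableSpace.comap T Real.measurableSpace) mΩ P)
    {F : ℝ × Ω → ℝ≥0∞}
    (hF : @Measurable (ℝ × Ω) ℝ≥0∞ (@Prod.instMeasurableSpace ℝ Ω Real.measurableSpace G) _ F) :
    ∫⁻ ω, F (T ω, ω) ∂P = ∫⁻ t, ∫⁻ ω, F (t, ω) ∂(P.trim hGle) ∂(@Measure.map Ω ℝ mΩ Real.measurableSpace T P) := by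
  have hpair : @Measurable Ω (ℝ × Ω) mΩ (@Prod.instMeasurableSpace ℝ Ω Real.measurableSpace G)
      (fun ω => (T ω, ω)) :=
    hT.prodMk (measurable_id'' hGle)
  have hmap : @Measure.map Ω (ℝ × Ω) mΩ (@Prod.instMeasurableSpace ℝ Ω Real.measurableSpace G)
        (fun ω => (T ω, ω)) P
      = @Measure.prod ℝ Ω Real.measurableSpace G (@Measure.map Ω ℝ mΩ Real.measurableSpace T P) (P.trim hGle) := by
    refine (Measure.prod_eq fun s u hs hu => ?_).symm
    rw [Measure.map_apply hpair (hs.prod hu)]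
    have hxy : (fun ω => (T ω, ω)) ⁻¹' (s ×ˢ u) = (T ⁻¹' s) ∩ u := by
      ext ω; simp [Set.mem_prod]
    rw [hxy, (Indep_iff _ _ _).1 hindep.symm (T ⁻¹' s) u ⟨s, hs, rfl⟩ hu,
      @Measure.map_apply Ω ℝ mΩ Real.measurableSpace P T hT s hs, trim_measurableSet_eq hGle hu]
  have h1 : ∫⁻ ω, F (T ω, ω) ∂P
      = ∫⁻ p, F p ∂(@Measure.map Ω (ℝ × Ω) mΩ
          (@Prod.instMeasurableSpace ℝ Ω Real.measurableSpace G) (fun ω => (T ω, ω)) P) :=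
    (@lintegral_map Ω (ℝ × Ω) mΩ _ P F (fun ω => (T ω, ω)) hF hpair).symm
  rw [h1, hmap]
  exact lintegral_prod F hF.aemeasurable
lemma measF_prod {Ω : Type*} (W : ℝ → Ω → ℝ) (θ κ : ℝ)
    (hWc : ∀ ω, Continuous fun t => W t ω) :
    @Measurable (ℝ × Ω) ℝ≥0∞
      (@Prod.instMeasurableSpace ℝ Ω Real.measurableSpace
        (⨆ t : ℝ, MeasurableSpace.comap (W t) Real.measurableSpace)) _
      (fun p => ENNReal.ofReal (Real.exp (θ * W p.1 p.2 + κ * p.1))) := by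
  set G := ⨆ t : ℝ, MeasurableSpace.comap (W t) Real.measurableSpace with hGdef
  have hWtG : ∀ t, @Measurable Ω ℝ G Real.measurableSpace (W t) := fun t =>
    Measurable.of_comap_le (le_iSup (fun t => MeasurableSpace.comap (W t) Real.measurableSpace) t)
  have hU : @Measurable (ℝ × Ω) ℝ (@Prod.instMeasurableSpace ℝ Ω Real.measurableSpace G) _
      (Function.uncurry W) :=
    measurable_uncurry_of_continuous_of_measurable (u := W) hWc hWtG
  have hU' : @Measurable (ℝ × Ω) ℝ (@Prod.instMeasurableSpace ℝ Ω Real.measurableSpace G) _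
      (fun p : ℝ × Ω => W p.1 p.2) := by rw [← Function.uncurry_def]; exact hU
  exact ENNReal.measurable_ofReal.comp
    (Real.measurable_exp.comp ((hU'.const_mul θ).add (measurable_fst.const_mul κ)))

lemma factor_lt_top {Ω : Type*} [mΩ : MeasurableSpace Ω] (P : Measure Ω) [IsProbabilityMeasure P]
    (W : ℝ → Ω → ℝ) (T : Ω → ℝ) (l θ κ : ℝ)
    (hWm : ∀ t, Measurable (W t)) (hW0 : ∀ ω, W 0 ω = 0)
    (hWc : ∀ ω, Continuous fun t => W t ω)
    (hWlaw : ∀ s t : ℝ, 0 ≤ s → s ≤ t →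
      Measure.map (fun ω => W t ω - W s ω) P = gaussianReal 0 (Real.toNNReal (t - s)))
    (hT : Measurable T) (hl : 0 < l) (hTlaw : Measure.map T P = expMeasure l)
    (hindep : Indep (⨆ t : ℝ, MeasurableSpace.comap (W t) Real.measurableSpace)
      (MeasurableSpace.comap T Real.measurableSpace) P)
    (hcond : θ ^ 2 / 2 + κ < l) :
    ∫⁻ ω, ENNReal.ofReal (Real.exp (θ * W (T ω) ω + κ * T ω)) ∂P < ⊤ := by
  set G := ⨆ t : ℝ, MeasurableSpace.comap (W t) Real.measurableSpace with hGdef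
  have hGle : G ≤ mΩ := iSup_le fun t => measurable_iff_comap_le.mp (hWm t)
  have hWtG : ∀ t, @Measurable Ω ℝ G Real.measurableSpace (W t) := fun t =>
    Measurable.of_comap_le (le_iSup (fun t => MeasurableSpace.comap (W t) Real.measurableSpace) t)
  have hF := measF_prod W θ κ hWc
  have key : ∫⁻ ω, ENNReal.ofReal (Real.exp (θ * W (T ω) ω + κ * T ω)) ∂P
      = ∫⁻ t, ∫⁻ ω, ENNReal.ofReal (Real.exp (θ * W t ω + κ * t)) ∂(P.trim hGle)
          ∂(expMeasure l) := by
    rw [← hTlaw]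
    exact lintegral_pair_indep hGle P hT hindep hF
  have hmeasG : ∀ t : ℝ, @Measurable Ω ℝ≥0∞ G _
      (fun ω => ENNReal.ofReal (Real.exp (θ * W t ω + κ * t))) := fun t =>
    ENNReal.measurable_ofReal.comp
      (Real.measurable_exp.comp (((hWtG t).const_mul θ).add_const _))
  have hinner : ∀ t : ℝ, 0 ≤ t →
      (∫⁻ ω, ENNReal.ofReal (Real.exp (θ * W t ω + κ * t)) ∂(P.trim hGle))
        = ENNReal.ofReal (Real.exp ((θ ^ 2 / 2 + κ) * t)) := by
    intro t ht
    rw [lintegral_trim hGle (hmeasG t)]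
    have hlaw : @Measure.map Ω ℝ mΩ Real.measurableSpace (W t) P
        = gaussianReal 0 (Real.toNNReal t) := by
      have h := hWlaw 0 t le_rfl ht
      simpa [hW0] using h
    have h2 : ∫⁻ ω, ENNReal.ofReal (Real.exp (θ * W t ω + κ * t)) ∂P
        = ∫⁻ x, ENNReal.ofReal (Real.exp (θ * x + κ * t)) ∂(gaussianReal 0 (Real.toNNReal t)) := by
      rw [← hlaw]
      exact (@lintegral_map Ω ℝ mΩ _ P _ _ (by fun_prop : Measurable fun x : ℝ => ENNReal.ofReal (Real.exp (θ * x + κ * t))) (hWm t)).symm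
    rw [h2]
    have h3 : ∀ x : ℝ, ENNReal.ofReal (Real.exp (θ * x + κ * t))
        = ENNReal.ofReal (Real.exp (κ * t)) * ENNReal.ofReal (Real.exp (θ * x)) := by
      intro x
      rw [← ENNReal.ofReal_mul (Real.exp_nonneg _), ← Real.exp_add, add_comm]
    simp only [h3]
    rw [lintegral_const_mul _ (by fun_prop : Measurable fun x : ℝ =>
        ENNReal.ofReal (Real.exp (θ * x))),
      lintegral_exp_gaussianReal θ _, ← ENNReal.ofReal_mul (Real.exp_nonneg _), ← Real.exp_add]
    congr 1
    rw [Real.coe_toNNReal t ht]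
    ring
  have hae : ∀ᵐ t ∂(expMeasure l), 0 ≤ t := by
    rw [ae_iff]
    have hset : {t : ℝ | ¬ 0 ≤ t} = Set.Iio 0 := by ext t; simp
    rw [hset]
    show (volume.withDensity (gammaPDF 1 l)) (Set.Iio 0) = 0
    rw [withDensity_apply _ measurableSet_Iio]
    exact lintegral_gammaPDF_of_nonpos le_rfl
  rw [key, lintegral_congr_ae (hae.mono fun t ht => hinner t ht)]
  exact lintegral_exp_expMeasure hl hcond


lemma exists_eps (l01 l10 s0 s1 b0 b1 β : ℝ) (hs0 : 0 < s0) (hs1 : 0 < s1)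
    (hl01 : 0 < l01) (hl10 : 0 < l10) (hb0 : 0 < b0) (hβ : β ∈ Set.Ioo b0 b1)
    (hroot : s0 * s1 * β * (b0 - β) * (b1 - β) + 2 * s0 * (b0 - β) * l10
        + 2 * s1 * (b1 - β) * l01 = 0) :
    ∃ q : ℝ, β < q ∧ 0 < l01 + s0 / 2 * q * (b0 - q) ∧ 0 < l10 + s1 / 2 * q * (b1 - q) := by
  obtain ⟨hβl, hβr⟩ := hβ
  have hβpos : 0 < β := hb0.trans hβl
  have hD1 : 0 < l10 + s1 / 2 * β * (b1 - β) := by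
    have h := mul_pos (mul_pos (by linarith : (0:ℝ) < s1 / 2) hβpos) (by linarith : 0 < b1 - β)
    linarith
  have hprod : (l01 + s0 / 2 * β * (b0 - β)) * (l10 + s1 / 2 * β * (b1 - β)) = l01 * l10 := by
    linear_combination (β / 4) * hroot
  have hD0 : 0 < l01 + s0 / 2 * β * (b0 - β) := by nlinarith [mul_pos hl01 hl10, hprod, hD1]
  set S : Set ℝ := {q | 0 < l01 + s0 / 2 * q * (b0 - q)} ∩ {q | 0 < l10 + s1 / 2 * q * (b1 - q)}
    with hS
  have hopen : IsOpen S := by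
    apply IsOpen.inter
    · exact isOpen_lt continuous_const (by continuity)
    · exact isOpen_lt continuous_const (by continuity)
  have hmem : β ∈ S := ⟨hD0, hD1⟩
  obtain ⟨δ, hδ, hball⟩ := Metric.isOpen_iff.mp hopen β hmem
  refine ⟨β + δ / 2, by linarith, ?_⟩
  have : β + δ / 2 ∈ S := by
    apply hball
    rw [Metric.mem_ball, Real.dist_eq]
    rw [abs_of_pos (by linarith : (0:ℝ) < β + δ / 2 - β)]
    linarith
  exact this

lemma rpow_mul_posLog_le {x ε b : ℝ} (hε : 0 < ε) :
    Real.exp x ^ b * max (Real.log (Real.exp x)) 0 ≤ ε⁻¹ * Real.exp x ^ (b + ε) := by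
  rw [Real.log_exp]
  rcases le_or_gt x 0 with hx | hx
  · rw [max_eq_right hx, mul_zero]
    positivity
  · rw [max_eq_left hx.le, Real.rpow_add (Real.exp_pos x)]
    have h2 : Real.exp x ^ ε = Real.exp (ε * x) := by
      rw [Real.rpow_def_of_pos (Real.exp_pos x), Real.log_exp, mul_comm]
    rw [h2]
    have hb : (0:ℝ) < Real.exp x ^ b := Real.rpow_pos_of_pos (Real.exp_pos x) b
    have h3 : ε * x + 1 ≤ Real.exp (ε * x) := Real.add_one_le_exp _
    have hx' : x ≤ ε⁻¹ * Real.exp (ε * x) := by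
      have h4 : ε * x ≤ Real.exp (ε * x) := by linarith
      have h5 := mul_le_mul_of_nonneg_left h4 (inv_nonneg.2 hε.le)
      rwa [← mul_assoc, inv_mul_cancel₀ hε.ne', one_mul] at h5
    calc Real.exp x ^ b * x ≤ Real.exp x ^ b * (ε⁻¹ * Real.exp (ε * x)) :=
          mul_le_mul_of_nonneg_left hx' hb.le
      _ = ε⁻¹ * (Real.exp x ^ b * Real.exp (ε * x)) := by ring
set_option maxHeartbeats 1000000 in
/-- At the root `β` of equation (7), the cycle factor `M = e^{-V_{τ₂}}` has a finite moment of
some order `β + ε` with `ε > 0`; in particular `E[M^β (ln M)⁺] < ∞`. -/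
theorem moment_slightly_above_beta_finite
    {Ω : Type*} [MeasurableSpace Ω] (P : Measure Ω) [IsProbabilityMeasure P]
    (W W' : ℝ → Ω → ℝ) (T0 T1 : Ω → ℝ) (l01 l10 σ0 σ1 a0 a1 β : ℝ)
    (hW : IsStandardBM P W) (hW' : IsStandardBM P W')
    (hT0 : Measurable T0) (hT1 : Measurable T1)
    (hl01 : 0 < l01) (hl10 : 0 < l10)
    (hT0law : Measure.map T0 P = expMeasure l01)
    (hT1law : Measure.map T1 P = expMeasure l10)
    (hindep : iIndep
      ![⨆ t : ℝ, MeasurableSpace.comap (W t) Real.measurableSpace,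
        ⨆ t : ℝ, MeasurableSpace.comap (W' t) Real.measurableSpace,
        MeasurableSpace.comap T0 Real.measurableSpace,
        MeasurableSpace.comap T1 Real.measurableSpace] P)
    (hσ0 : 0 < σ0) (hσ1 : 0 < σ1)
    (hβ0 : 0 < 2 * a0 / σ0 ^ 2 - 1)
    (hβ01 : 2 * a0 / σ0 ^ 2 - 1 < 2 * a1 / σ1 ^ 2 - 1)
    (hβ : β ∈ Set.Ioo (2 * a0 / σ0 ^ 2 - 1) (2 * a1 / σ1 ^ 2 - 1))
    (hroot : σ0 ^ 2 * σ1 ^ 2 * β * ((2 * a0 / σ0 ^ 2 - 1) - β) * ((2 * a1 / σ1 ^ 2 - 1) - β)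
        + 2 * σ0 ^ 2 * ((2 * a0 / σ0 ^ 2 - 1) - β) * l10
        + 2 * σ1 ^ 2 * ((2 * a1 / σ1 ^ 2 - 1) - β) * l01 = 0) :
    (∃ ε : ℝ, 0 < ε ∧
      ∫⁻ ω, ENNReal.ofReal
          (Real.exp (-(σ0 * W (T0 ω) ω + (a0 - σ0 ^ 2 / 2) * T0 ω)
              - (σ1 * W' (T1 ω) ω + (a1 - σ1 ^ 2 / 2) * T1 ω)) ^ (β + ε)) ∂P < ⊤) ∧
    ∫⁻ ω, ENNReal.ofReal
        (Real.exp (-(σ0 * W (T0 ω) ω + (a0 - σ0 ^ 2 / 2) * T0 ω)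
            - (σ1 * W' (T1 ω) ω + (a1 - σ1 ^ 2 / 2) * T1 ω)) ^ β
          * max (Real.log (Real.exp (-(σ0 * W (T0 ω) ω + (a0 - σ0 ^ 2 / 2) * T0 ω)
              - (σ1 * W' (T1 ω) ω + (a1 - σ1 ^ 2 / 2) * T1 ω)))) 0) ∂P < ⊤ := by

  classical
  obtain ⟨hWm, hW0, hWc, hWlawBM, -⟩ := hW
  obtain ⟨hW'm, hW'0, hW'c, hW'lawBM, -⟩ := hW'
  set b0 : ℝ := 2 * a0 / σ0 ^ 2 - 1 with hb0def
  set b1 : ℝ := 2 * a1 / σ1 ^ 2 - 1 with hb1def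
  obtain ⟨q, hqβ, hD0, hD1⟩ := exists_eps l01 l10 (σ0 ^ 2) (σ1 ^ 2) b0 b1 β
    (by positivity) (by positivity) hl01 hl10 hβ0 hβ hroot
  have hle : ∀ i, (![⨆ t : ℝ, MeasurableSpace.comap (W t) Real.measurableSpace,
      ⨆ t : ℝ, MeasurableSpace.comap (W' t) Real.measurableSpace,
      MeasurableSpace.comap T0 Real.measurableSpace,
      MeasurableSpace.comap T1 Real.measurableSpace] : Fin 4 → MeasurableSpace Ω) i ≤ ‹MeasurableSpace Ω› := by
    intro i
    fin_cases i
    · exact iSup_le fun t => measurable_iff_comap_le.mp (hWm t)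
    · exact iSup_le fun t => measurable_iff_comap_le.mp (hW'm t)
    · exact measurable_iff_comap_le.mp hT0
    · exact measurable_iff_comap_le.mp hT1
  have hd : Disjoint ({0, 2} : Set (Fin 4)) ({1, 3} : Set (Fin 4)) := by
    simp only [Set.disjoint_left, Set.mem_insert_iff, Set.mem_singleton_iff]
    decide
  have hsup := indep_iSup_of_disjoint hle hindep hd
  have e0 : (⨆ i ∈ ({0, 2} : Set (Fin 4)), (![⨆ t : ℝ, MeasurableSpace.comap (W t) Real.measurableSpace,
      ⨆ t : ℝ, MeasurableSpace.comap (W' t) Real.measurableSpace,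
      MeasurableSpace.comap T0 Real.measurableSpace,
      MeasurableSpace.comap T1 Real.measurableSpace] : Fin 4 → MeasurableSpace Ω) i) = (![⨆ t : ℝ, MeasurableSpace.comap (W t) Real.measurableSpace,
      ⨆ t : ℝ, MeasurableSpace.comap (W' t) Real.measurableSpace,
      MeasurableSpace.comap T0 Real.measurableSpace,
      MeasurableSpace.comap T1 Real.measurableSpace] : Fin 4 → MeasurableSpace Ω) 0 ⊔ (![⨆ t : ℝ, MeasurableSpace.comap (W t) Real.measurableSpace,
      ⨆ t : ℝ, MeasurableSpace.comap (W' t) Real.measurableSpace,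
      MeasurableSpace.comap T0 Real.measurableSpace,
      MeasurableSpace.comap T1 Real.measurableSpace] : Fin 4 → MeasurableSpace Ω) 2 := by
    rw [iSup_insert, iSup_singleton]
  have e1 : (⨆ i ∈ ({1, 3} : Set (Fin 4)), (![⨆ t : ℝ, MeasurableSpace.comap (W t) Real.measurableSpace,
      ⨆ t : ℝ, MeasurableSpace.comap (W' t) Real.measurableSpace,
      MeasurableSpace.comap T0 Real.measurableSpace,
      MeasurableSpace.comap T1 Real.measurableSpace] : Fin 4 → MeasurableSpace Ω) i) = (![⨆ t : ℝ, MeasurableSpace.comap (W t) Real.measurableSpace,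
      ⨆ t : ℝ, MeasurableSpace.comap (W' t) Real.measurableSpace,
      MeasurableSpace.comap T0 Real.measurableSpace,
      MeasurableSpace.comap T1 Real.measurableSpace] : Fin 4 → MeasurableSpace Ω) 1 ⊔ (![⨆ t : ℝ, MeasurableSpace.comap (W t) Real.measurableSpace,
      ⨆ t : ℝ, MeasurableSpace.comap (W' t) Real.measurableSpace,
      MeasurableSpace.comap T0 Real.measurableSpace,
      MeasurableSpace.comap T1 Real.measurableSpace] : Fin 4 → MeasurableSpace Ω) 3 := by
    rw [iSup_insert, iSup_singleton]
  rw [e0, e1] at hsup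
  have hsup' : Indep
      ((⨆ t : ℝ, MeasurableSpace.comap (W t) Real.measurableSpace)
        ⊔ MeasurableSpace.comap T0 Real.measurableSpace)
      ((⨆ t : ℝ, MeasurableSpace.comap (W' t) Real.measurableSpace)
        ⊔ MeasurableSpace.comap T1 Real.measurableSpace) P := hsup
  set θ0 : ℝ := -(q * σ0) with hθ0def
  set κ0 : ℝ := -(q * (a0 - σ0 ^ 2 / 2)) with hκ0def
  set θ1 : ℝ := -(q * σ1) with hθ1def
  set κ1 : ℝ := -(q * (a1 - σ1 ^ 2 / 2)) with hκ1def
  have hcond0 : θ0 ^ 2 / 2 + κ0 < l01 := by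
    have hexp : σ0 ^ 2 / 2 * q * (b0 - q)
        = q * a0 - q * (σ0 ^ 2) / 2 - q ^ 2 * σ0 ^ 2 / 2 := by
      rw [hb0def]; field_simp
    rw [hθ0def, hκ0def]
    nlinarith [hD0, hexp]
  have hcond1 : θ1 ^ 2 / 2 + κ1 < l10 := by
    have hexp : σ1 ^ 2 / 2 * q * (b1 - q)
        = q * a1 - q * (σ1 ^ 2) / 2 - q ^ 2 * σ1 ^ 2 / 2 := by
      rw [hb1def]; field_simp
    rw [hθ1def, hκ1def]
    nlinarith [hD1, hexp]
  have hfact0 : ∫⁻ ω, ENNReal.ofReal (Real.exp (θ0 * W (T0 ω) ω + κ0 * T0 ω)) ∂P < ⊤ :=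
    factor_lt_top P W T0 l01 θ0 κ0 hWm hW0 hWc hWlawBM hT0 hl01 hT0law
      (hindep.indep (show (0 : Fin 4) ≠ 2 by decide)) hcond0
  have hfact1 : ∫⁻ ω, ENNReal.ofReal (Real.exp (θ1 * W' (T1 ω) ω + κ1 * T1 ω)) ∂P < ⊤ :=
    factor_lt_top P W' T1 l10 θ1 κ1 hW'm hW'0 hW'c hW'lawBM hT1 hl10 hT1law
      (hindep.indep (show (1 : Fin 4) ≠ 3 by decide)) hcond1
  have hmf : Measurable[(⨆ t : ℝ, MeasurableSpace.comap (W t) Real.measurableSpace)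
        ⊔ MeasurableSpace.comap T0 Real.measurableSpace]
      (fun ω => ENNReal.ofReal (Real.exp (θ0 * W (T0 ω) ω + κ0 * T0 ω))) := by
    have hpair : @Measurable Ω (ℝ × Ω)
        ((⨆ t : ℝ, MeasurableSpace.comap (W t) Real.measurableSpace)
          ⊔ MeasurableSpace.comap T0 Real.measurableSpace)
        (@Prod.instMeasurableSpace ℝ Ω Real.measurableSpace
          (⨆ t : ℝ, MeasurableSpace.comap (W t) Real.measurableSpace)) (fun ω => (T0 ω, ω)) :=
      Measurable.prodMk (Measurable.of_comap_le le_sup_right) (measurable_id'' le_sup_left)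
    have h2 := (measF_prod W θ0 κ0 hWc).comp hpair
    exact h2
  have hmg : Measurable[(⨆ t : ℝ, MeasurableSpace.comap (W' t) Real.measurableSpace)
        ⊔ MeasurableSpace.comap T1 Real.measurableSpace]
      (fun ω => ENNReal.ofReal (Real.exp (θ1 * W' (T1 ω) ω + κ1 * T1 ω))) := by
    have hpair : @Measurable Ω (ℝ × Ω)
        ((⨆ t : ℝ, MeasurableSpace.comap (W' t) Real.measurableSpace)
          ⊔ MeasurableSpace.comap T1 Real.measurableSpace)
        (@Prod.instMeasurableSpace ℝ Ω Real.measurableSpace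
          (⨆ t : ℝ, MeasurableSpace.comap (W' t) Real.measurableSpace)) (fun ω => (T1 ω, ω)) :=
      Measurable.prodMk (Measurable.of_comap_le le_sup_right) (measurable_id'' le_sup_left)
    have h2 := (measF_prod W' θ1 κ1 hW'c).comp hpair
    exact h2
  have hprodint : ∫⁻ ω, ENNReal.ofReal (Real.exp (θ0 * W (T0 ω) ω + κ0 * T0 ω))
        * ENNReal.ofReal (Real.exp (θ1 * W' (T1 ω) ω + κ1 * T1 ω)) ∂P
      = (∫⁻ ω, ENNReal.ofReal (Real.exp (θ0 * W (T0 ω) ω + κ0 * T0 ω)) ∂P)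
        * ∫⁻ ω, ENNReal.ofReal (Real.exp (θ1 * W' (T1 ω) ω + κ1 * T1 ω)) ∂P :=
    lintegral_mul_eq_lintegral_mul_lintegral_of_independent_measurableSpace
      (sup_le (hle 0) (hle 2)) (sup_le (hle 1) (hle 3)) hsup' hmf hmg
  have hptq : ∀ ω : Ω, ENNReal.ofReal
      (Real.exp (-(σ0 * W (T0 ω) ω + (a0 - σ0 ^ 2 / 2) * T0 ω)
        - (σ1 * W' (T1 ω) ω + (a1 - σ1 ^ 2 / 2) * T1 ω)) ^ q)
      = ENNReal.ofReal (Real.exp (θ0 * W (T0 ω) ω + κ0 * T0 ω))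
        * ENNReal.ofReal (Real.exp (θ1 * W' (T1 ω) ω + κ1 * T1 ω)) := by
    intro ω
    rw [Real.rpow_def_of_pos (Real.exp_pos _), Real.log_exp]
    have harg : (-(σ0 * W (T0 ω) ω + (a0 - σ0 ^ 2 / 2) * T0 ω)
          - (σ1 * W' (T1 ω) ω + (a1 - σ1 ^ 2 / 2) * T1 ω)) * q
        = (θ0 * W (T0 ω) ω + κ0 * T0 ω) + (θ1 * W' (T1 ω) ω + κ1 * T1 ω) := by
      rw [hθ0def, hκ0def, hθ1def, hκ1def]; ring
    rw [harg, Real.exp_add, ENNReal.ofReal_mul (Real.exp_nonneg _)]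
  have hfirst : ∫⁻ ω, ENNReal.ofReal
      (Real.exp (-(σ0 * W (T0 ω) ω + (a0 - σ0 ^ 2 / 2) * T0 ω)
        - (σ1 * W' (T1 ω) ω + (a1 - σ1 ^ 2 / 2) * T1 ω)) ^ q) ∂P < ⊤ := by
    rw [lintegral_congr hptq, hprodint]
    exact ENNReal.mul_lt_top hfact0 hfact1
  have hqe : β + (q - β) = q := by ring
  have hεpos : (0 : ℝ) < q - β := by linarith
  constructor
  · exact ⟨q - β, hεpos, by simp only [hqe]; exact hfirst⟩
  · calc ∫⁻ ω, ENNReal.ofReal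
          (Real.exp (-(σ0 * W (T0 ω) ω + (a0 - σ0 ^ 2 / 2) * T0 ω)
              - (σ1 * W' (T1 ω) ω + (a1 - σ1 ^ 2 / 2) * T1 ω)) ^ β
            * max (Real.log (Real.exp (-(σ0 * W (T0 ω) ω + (a0 - σ0 ^ 2 / 2) * T0 ω)
                - (σ1 * W' (T1 ω) ω + (a1 - σ1 ^ 2 / 2) * T1 ω)))) 0) ∂P
        ≤ ∫⁻ ω, ENNReal.ofReal ((q - β)⁻¹) * ENNReal.ofReal
          (Real.exp (-(σ0 * W (T0 ω) ω + (a0 - σ0 ^ 2 / 2) * T0 ω)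
              - (σ1 * W' (T1 ω) ω + (a1 - σ1 ^ 2 / 2) * T1 ω)) ^ q) ∂P := by
          apply lintegral_mono
          intro ω
          dsimp only
          rw [← ENNReal.ofReal_mul (inv_nonneg.2 hεpos.le)]
          have h := rpow_mul_posLog_le (b := β) (hεpos)
            (x := -(σ0 * W (T0 ω) ω + (a0 - σ0 ^ 2 / 2) * T0 ω)
              - (σ1 * W' (T1 ω) ω + (a1 - σ1 ^ 2 / 2) * T1 ω))
          rw [hqe] at h
          exact ENNReal.ofReal_le_ofReal h
      _ = ENNReal.ofReal ((q - β)⁻¹) * ∫⁻ ω, ENNReal.ofReal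
          (Real.exp (-(σ0 * W (T0 ω) ω + (a0 - σ0 ^ 2 / 2) * T0 ω)
              - (σ1 * W' (T1 ω) ω + (a1 - σ1 ^ 2 / 2) * T1 ω)) ^ q) ∂P :=
        lintegral_const_mul' _ _ ENNReal.ofReal_ne_top
      _ < ⊤ := ENNReal.mul_lt_top ENNReal.ofReal_lt_top hfirst
end
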